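/- arXiv:1305.6601 — 4 statements merged into one kernel-verified Lean document; each statement's English description precedes it below -/
import Mathlib

section
/- Let f : I ⊆ (0,∞) → (0,∞) be differentiable on I°, let a, b ∈ I° with a < b, f' integrable on [a,b], and suppose |f'|^q is s-geometrically convex on [a,b] for some q ≥ 1 and s ∈ (0,1]. If |f'(a)| ≤ 1 ≤ |f'(b)|, then |f(√(ab)) − (1/(ln b − ln a)) ∫_a^b f(x)/x dx| ≤ ln(b/a) · (1/2)^{3−1/q} · [ a|f'(a)|^s |f'(b)|^{1−s} g₁(θ₃)^{1/q} + b|f'(b)| g₁(θ₄)^{1/q} ]. -/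
open Real MeasureTheory Set

/-- `g` is `s`-geometrically convex on `J`. -/
def SGeometricallyConvexOn (s : ℝ) (J : Set ℝ) (g : ℝ → ℝ) : Prop :=
  ∀ x ∈ J, ∀ y ∈ J, ∀ t ∈ Set.Icc (0:ℝ) 1,
    g (x ^ t * y ^ (1 - t)) ≤ g x ^ t ^ s * g y ^ (1 - t) ^ s

noncomputable def g₁ (u : ℝ) : ℝ :=
  if u = 1 then 1/2 else (u * Real.log u - u + 1) / (Real.log u) ^ 2

noncomputable def g₂ (u : ℝ) : ℝ :=
  if u = 1 then 1 else (u - 1) / Real.log u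

lemma g₁_nonneg (u : ℝ) (hu : 0 ≤ u) : 0 ≤ g₁ u := by
  unfold g₁
  split_ifs with h
  · norm_num
  · rcases eq_or_lt_of_le hu with rfl | hu'
    · simp
    · apply div_nonneg _ (sq_nonneg _)
      have h1 : Real.log u⁻¹ ≤ u⁻¹ - 1 := Real.log_le_sub_one_of_pos (by positivity)
      rw [Real.log_inv] at h1
      have h2 := mul_le_mul_of_nonneg_left h1 hu'.le
      have h3 : u * u⁻¹ = 1 := mul_inv_cancel₀ hu'.ne'
      nlinarith

lemma g₁_zero : g₁ 0 = 0 := by unfold g₁; norm_num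

lemma core_int (u : ℝ) (hu : 0 < u) :
    ∫ t in (0:ℝ)..(1/2), t * u ^ (2*t) = g₁ u / 4 := by
  rcases eq_or_ne u 1 with rfl | hne
  · simp only [Real.one_rpow, mul_one, g₁, if_pos rfl]
    rw [integral_id]
    norm_num
  · have hlog : Real.log u ≠ 0 := Real.log_ne_zero_of_pos_of_ne_one hu hne
    set c : ℝ := 2 * Real.log u with hc
    have hc0 : c ≠ 0 := by simp [hc, hlog]
    have hrw : ∀ t : ℝ, u ^ (2*t) = Real.exp (c * t) := by
      intro t
      rw [Real.rpow_def_of_pos hu]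
      ring_nf
      rw [hc]
      ring_nf
    have hderiv : ∀ t ∈ uIcc (0:ℝ) (1/2),
        HasDerivAt (fun t => (t/c - 1/c^2) * Real.exp (c*t)) (t * Real.exp (c*t)) t := by
      intro t _
      have h1 : HasDerivAt (fun t : ℝ => t/c - 1/c^2) (1/c) t :=
        ((hasDerivAt_id t).div_const c).sub_const (1/c^2)
      have h2 : HasDerivAt (fun t : ℝ => Real.exp (c*t)) (Real.exp (c*t) * c) t := by
        simpa using ((hasDerivAt_id t).const_mul c).exp
      have := h1.fun_mul h2
      refine this.congr_deriv ?_
      field_simp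
      ring
    have hcont : IntervalIntegrable (fun t : ℝ => t * Real.exp (c*t)) volume 0 (1/2) := by
      apply Continuous.intervalIntegrable
      continuity
    have hsub := intervalIntegral.integral_eq_sub_of_hasDerivAt hderiv hcont
    have heq : ∫ t in (0:ℝ)..(1/2), t * u ^ (2*t)
        = ∫ t in (0:ℝ)..(1/2), t * Real.exp (c*t) := by
      apply intervalIntegral.integral_congr
      intro t _
      simp [hrw t]
    rw [heq, hsub]
    have hexp : Real.exp (c * (1/2)) = u := by
      rw [hc, show 2 * Real.log u * (1/2) = Real.log u by ring, Real.exp_log hu]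
    rw [hexp]
    simp only [mul_zero, Real.exp_zero]
    unfold g₁
    rw [if_neg hne, hc]
    field_simp
    ring

lemma cf (C D : ℝ) (hC : 0 ≤ C) (hD : 0 ≤ D) :
    ∫ t in (0:ℝ)..(1/2), t * (C ^ (1-t) * D ^ t) = C * g₁ ((D/C) ^ (1/2 : ℝ)) / 4 := by
  rcases eq_or_lt_of_le hC with rfl | hCpos
  · have : EqOn (fun t : ℝ => t * ((0:ℝ) ^ (1-t) * D ^ t)) (fun _ => (0:ℝ))
        (uIcc (0:ℝ) (1/2)) := by
      intro t ht
      rw [uIcc_of_le (by norm_num)] at ht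
      have h1 : (1:ℝ) - t ≠ 0 := by
        have := ht.2; intro h; nlinarith
      simp [Real.zero_rpow h1]
    rw [intervalIntegral.integral_congr this]
    simp
  · rcases eq_or_lt_of_le hD with rfl | hDpos
    · have : EqOn (fun t : ℝ => t * (C ^ (1-t) * (0:ℝ) ^ t)) (fun _ => (0:ℝ))
          (uIcc (0:ℝ) (1/2)) := by
        intro t ht
        rw [uIcc_of_le (by norm_num)] at ht
        rcases eq_or_lt_of_le ht.1 with rfl | htpos
        · simp
        · simp [Real.zero_rpow htpos.ne']
      rw [intervalIntegral.integral_congr this]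
      have : ((0:ℝ)/C) ^ (1/2 : ℝ) = 0 := by
        rw [zero_div, Real.zero_rpow (by norm_num)]
      rw [this, g₁_zero]
      simp
    · set u : ℝ := (D/C) ^ (1/2 : ℝ) with hu_def
      have hu : 0 < u := Real.rpow_pos_of_pos (div_pos hDpos hCpos) _
      have key : ∀ t : ℝ, C ^ (1-t) * D ^ t = C * u ^ (2*t) := by
        intro t
        have h1 : u ^ (2*t) = (D/C) ^ t := by
          rw [hu_def, ← Real.rpow_mul (div_pos hDpos hCpos).le]
          congr 1
          ring
        rw [h1, Real.div_rpow hD hCpos.le, Real.rpow_sub hCpos, Real.rpow_one]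
        have : C ^ t ≠ 0 := (Real.rpow_pos_of_pos hCpos t).ne'
        field_simp
      have : EqOn (fun t : ℝ => t * (C ^ (1-t) * D ^ t))
          (fun t : ℝ => C * (t * u ^ (2*t))) (uIcc (0:ℝ) (1/2)) := by
        intro t _
        simp only [key t]
        ring
      rw [intervalIntegral.integral_congr this, intervalIntegral.integral_const_mul,
        core_int u hu]
      ring

lemma holder_w {q : ℝ} (hq : 1 ≤ q) (H : ℝ → ℝ) (hH : Continuous H) (hH0 : ∀ t, 0 ≤ H t) :
    ∫ t in (0:ℝ)..(1/2), t * H t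
      ≤ (1/8 : ℝ) ^ (1 - 1/q) * (∫ t in (0:ℝ)..(1/2), t * H t ^ q) ^ (1/q) := by
  rcases eq_or_lt_of_le hq with rfl | hq1
  · simp [Real.rpow_one]
  · have hq0 : (0:ℝ) < q := by linarith
    set p : ℝ := q/(q-1) with hp_def
    have hpq : p.HolderConjugate q := by
      exact (Real.HolderConjugate.conjExponent hq1).symm
    have hV : IsFiniteMeasure (volume.restrict (Ioc (0:ℝ) (1/2))) := by
      constructor
      rw [Measure.restrict_apply_univ]
      simp [Real.volume_Ioc]
    set μ := volume.restrict (Ioc (0:ℝ) (1/2)) with hμ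
    set F : ℝ → ℝ := fun t => t ^ (1/p) with hF
    set G : ℝ → ℝ := fun t => t ^ (1/q) * H t with hG
    have hFc : Continuous F := by
      apply Real.continuous_rpow_const
      exact hpq.one_div_nonneg
    have hGc : Continuous G := by
      apply Continuous.mul _ hH
      apply Real.continuous_rpow_const
      positivity
    have hmem : ∀ t ∈ Ioc (0:ℝ) (1/2), t ∈ Icc (0:ℝ) (1/2) := fun t ht => Ioc_subset_Icc_self ht
    have hFmem : MemLp F (ENNReal.ofReal p) μ := by
      apply MemLp.of_bound hFc.aestronglyMeasurable 1
      filter_upwards [ae_restrict_mem measurableSet_Ioc] with t ht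
      rw [Real.norm_of_nonneg (Real.rpow_nonneg ht.1.le _)]
      exact Real.rpow_le_one ht.1.le (by linarith [ht.2]) hpq.one_div_nonneg
    have hGmem : MemLp G (ENNReal.ofReal q) μ := by
      obtain ⟨M, hM⟩ := (isCompact_Icc (a := (0:ℝ)) (b := 1/2)).exists_bound_of_continuousOn
        hGc.continuousOn
      apply MemLp.of_bound hGc.aestronglyMeasurable M
      filter_upwards [ae_restrict_mem measurableSet_Ioc] with t ht
      exact hM t (hmem t ht)
    have hF0 : 0 ≤ᵐ[μ] F := by
      filter_upwards [ae_restrict_mem measurableSet_Ioc] with t ht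
      exact Real.rpow_nonneg ht.1.le _
    have hG0 : 0 ≤ᵐ[μ] G := by
      filter_upwards [ae_restrict_mem measurableSet_Ioc] with t ht
      exact mul_nonneg (Real.rpow_nonneg ht.1.le _) (hH0 t)
    have holder := MeasureTheory.integral_mul_le_Lp_mul_Lq_of_nonneg hpq hF0 hG0 hFmem hGmem
    have e1 : ∫ t, F t * G t ∂μ = ∫ t in (0:ℝ)..(1/2), t * H t := by
      rw [intervalIntegral.integral_of_le (by norm_num), ← hμ]
      apply setIntegral_congr_fun measurableSet_Ioc
      intro t ht
      simp only [hF, hG]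
      have h1 : 1/p + 1/q = 1 := by
        rw [one_div, one_div]; exact hpq.inv_add_inv_eq_one
      rw [← mul_assoc, ← Real.rpow_add ht.1, h1, Real.rpow_one]
    have e2 : ∫ t, F t ^ p ∂μ = 1/8 := by
      have : ∫ t, F t ^ p ∂μ = ∫ t in (0:ℝ)..(1/2), t := by
        rw [intervalIntegral.integral_of_le (by norm_num), ← hμ]
        apply setIntegral_congr_fun measurableSet_Ioc
        intro t ht
        simp only [hF]
        rw [← Real.rpow_mul ht.1.le, one_div, inv_mul_cancel₀ hpq.ne_zero, Real.rpow_one]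
      rw [this, integral_id]
      norm_num
    have e3 : ∫ t, G t ^ q ∂μ = ∫ t in (0:ℝ)..(1/2), t * H t ^ q := by
      rw [intervalIntegral.integral_of_le (by norm_num), ← hμ]
      apply setIntegral_congr_fun measurableSet_Ioc
      intro t ht
      simp only [hG]
      rw [Real.mul_rpow (Real.rpow_nonneg ht.1.le _) (hH0 t),
        ← Real.rpow_mul ht.1.le, one_div, inv_mul_cancel₀ hpq.symm.ne_zero, Real.rpow_one]
    have hfinal : 1/p = 1 - 1/q := by
      rw [one_div, one_div]
      linarith [hpq.inv_add_inv_eq_one]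
    rw [e1, e2, e3, hfinal] at holder
    exact holder

lemma master {q : ℝ} (hq : 1 ≤ q) (C D E : ℝ) (hC : 0 ≤ C) (hD : 0 ≤ D) (hE : 0 < E)
    (h : ℝ → ℝ) (hint : IntervalIntegrable (fun t => t * h t) volume 0 (1/2))
    (h0 : ∀ t ∈ Icc (0:ℝ) (1/2), 0 ≤ h t)
    (hb : ∀ t ∈ Icc (0:ℝ) (1/2), h t ^ q ≤ C ^ (q*(1-t)) * D ^ (q*t) * E) :
    ∫ t in (0:ℝ)..(1/2), t * h t ≤
      (1/2 : ℝ) ^ (3 - 1/q) * (C * (E ^ (1/q) * g₁ ((D / C) ^ (q/2)) ^ (1/q))) := by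
  have hq0 : (0:ℝ) < q := by linarith
  have hhalf : ((0:ℝ)) ≤ 1/2 := by norm_num
  rcases eq_or_lt_of_le hC with rfl | hCpos
  · -- C = 0 : both sides are 0
    have hzero : ∀ t ∈ Icc (0:ℝ) (1/2), h t = 0 := by
      intro t ht
      have h1 : (0:ℝ) ^ (q*(1-t)) = 0 := by
        apply Real.zero_rpow
        have h2' : (0:ℝ) < q*(1-t) := by nlinarith [ht.2]
        exact h2'.ne'
      have h2 := hb t ht
      rw [h1, zero_mul, zero_mul] at h2
      by_contra hne
      have hpos : 0 < h t := lt_of_le_of_ne (h0 t ht) (Ne.symm hne)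
      have := Real.rpow_pos_of_pos hpos q
      linarith
    have : EqOn (fun t : ℝ => t * h t) (fun _ => (0:ℝ)) (uIcc (0:ℝ) (1/2)) := by
      intro t ht
      rw [uIcc_of_le hhalf] at ht
      simp [hzero t ht]
    rw [intervalIntegral.integral_congr this]
    have hrhs : (0:ℝ) ≤ (1/2 : ℝ) ^ (3 - 1/q) *
        (0 * (E ^ (1/q) * g₁ ((D / 0) ^ (q/2)) ^ (1/q))) := by
      simp
    simpa using hrhs
  rcases eq_or_lt_of_le hD with rfl | hDpos
  · -- D = 0 : both sides are 0
    have : EqOn (fun t : ℝ => t * h t) (fun _ => (0:ℝ)) (uIcc (0:ℝ) (1/2)) := by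
      intro t ht
      rw [uIcc_of_le hhalf] at ht
      rcases eq_or_lt_of_le ht.1 with rfl | htpos
      · simp
      · have h1 : (0:ℝ) ^ (q*t) = 0 := by
          apply Real.zero_rpow
          positivity
        have h2 := hb t ht
        rw [h1] at h2
        have hz : h t = 0 := by
          by_contra hne
          have hpos : 0 < h t := lt_of_le_of_ne (h0 t ht) (Ne.symm hne)
          have := Real.rpow_pos_of_pos hpos q
          nlinarith
        simp [hz]
    rw [intervalIntegral.integral_congr this]
    have hθ : ((0:ℝ) / C) ^ (q/2) = 0 := by
      rw [zero_div, Real.zero_rpow (by positivity)]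
    rw [hθ, g₁_zero, Real.zero_rpow (by positivity : 1/q ≠ 0)]
    simp
  -- main case
  set H : ℝ → ℝ := fun t => (C ^ (q*(1-t)) * D ^ (q*t) * E) ^ (1/q) with hH_def
  have hinner_pos : ∀ t : ℝ, 0 < C ^ (q*(1-t)) * D ^ (q*t) * E := by
    intro t
    have := Real.rpow_pos_of_pos hCpos (q*(1-t))
    have := Real.rpow_pos_of_pos hDpos (q*t)
    positivity
  have hH0 : ∀ t, 0 ≤ H t := fun t => Real.rpow_nonneg (hinner_pos t).le _
  have hHc : Continuous H := by
    apply Continuous.rpow_const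
    · apply Continuous.mul
      · apply Continuous.mul
        · apply Continuous.rpow continuous_const (by continuity)
          intro x; exact Or.inl hCpos.ne'
        · apply Continuous.rpow continuous_const (by continuity)
          intro x; exact Or.inl hDpos.ne'
      · exact continuous_const
    · intro x; right; positivity
  have hHq : ∀ t : ℝ, H t ^ q = C ^ (q*(1-t)) * D ^ (q*t) * E := by
    intro t
    rw [hH_def, ← Real.rpow_mul (hinner_pos t).le, one_div, inv_mul_cancel₀ hq0.ne',
      Real.rpow_one]
  have step1 : ∫ t in (0:ℝ)..(1/2), t * h t ≤ ∫ t in (0:ℝ)..(1/2), t * H t := by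
    apply intervalIntegral.integral_mono_on hhalf hint
      ((continuous_id.mul hHc).intervalIntegrable _ _)
    intro t ht
    have hle : h t ≤ H t := by
      have h1 : (h t ^ q) ^ (1/q) ≤ (C ^ (q*(1-t)) * D ^ (q*t) * E) ^ (1/q) :=
        Real.rpow_le_rpow (Real.rpow_nonneg (h0 t ht) q) (hb t ht) (by positivity)
      rwa [← Real.rpow_mul (h0 t ht), mul_one_div_cancel hq0.ne', Real.rpow_one] at h1
    exact mul_le_mul_of_nonneg_left hle ht.1
  have step2 := holder_w hq H hHc hH0
  have step3 : ∫ t in (0:ℝ)..(1/2), t * H t ^ q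
      = E * ((C ^ q) * g₁ (((D^q) / (C^q)) ^ (1/2 : ℝ)) / 4) := by
    have e1 : EqOn (fun t : ℝ => t * H t ^ q)
        (fun t : ℝ => E * (t * ((C^q) ^ (1-t) * (D^q) ^ t))) (uIcc (0:ℝ) (1/2)) := by
      intro t _
      simp only [hHq t]
      rw [Real.rpow_mul hC q (1-t), Real.rpow_mul hD q t]
      ring
    rw [intervalIntegral.integral_congr e1, intervalIntegral.integral_const_mul,
      cf (C^q) (D^q) (Real.rpow_nonneg hC q) (Real.rpow_nonneg hD q)]
  have hθeq : ((D^q) / (C^q)) ^ (1/2 : ℝ) = (D/C) ^ (q/2) := by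
    rw [← Real.div_rpow hD hC q, ← Real.rpow_mul (div_nonneg hD hC)]
    congr 1
    ring
  set X : ℝ := g₁ ((D / C) ^ (q/2)) with hX_def
  have hX : 0 ≤ X := g₁_nonneg _ (Real.rpow_nonneg (div_nonneg hD hC) _)
  calc ∫ t in (0:ℝ)..(1/2), t * h t ≤ ∫ t in (0:ℝ)..(1/2), t * H t := step1
    _ ≤ (1/8 : ℝ) ^ (1 - 1/q) * (∫ t in (0:ℝ)..(1/2), t * H t ^ q) ^ (1/q) := step2
    _ = (1/2 : ℝ) ^ (3 - 1/q) * (C * (E ^ (1/q) * X ^ (1/q))) := by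
        rw [step3, hθeq, ← hX_def]
        have d1 : E * (C^q * X / 4) = E * C^q * X * (1/4:ℝ) := by ring
        rw [d1, Real.mul_rpow (mul_nonneg (mul_nonneg hE.le (Real.rpow_nonneg hC q)) hX)
            (by norm_num : (0:ℝ) ≤ 1/4),
          Real.mul_rpow (mul_nonneg hE.le (Real.rpow_nonneg hC q)) hX,
          Real.mul_rpow hE.le (Real.rpow_nonneg hC q),
          ← Real.rpow_mul hC, mul_one_div_cancel hq0.ne', Real.rpow_one]
        have d2 : (1/8:ℝ) = (1/2:ℝ)^(3:ℝ) := by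
          rw [show (3:ℝ) = ((3:ℕ):ℝ) by norm_num, Real.rpow_natCast]
          norm_num
        have d3 : (1/4:ℝ) = (1/2:ℝ)^(2:ℝ) := by
          rw [show (2:ℝ) = ((2:ℕ):ℝ) by norm_num, Real.rpow_natCast]
          norm_num
        rw [d2, d3, ← Real.rpow_mul (by norm_num : (0:ℝ) ≤ 1/2),
          ← Real.rpow_mul (by norm_num : (0:ℝ) ≤ 1/2)]
        have d4 : (1/2:ℝ)^(3*(1-1/q)) * (1/2:ℝ)^(2*(1/q)) = (1/2:ℝ)^(3-1/q) := by
          rw [← Real.rpow_add (by norm_num : (0:ℝ) < 1/2)]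
          congr 1
          ring
        linear_combination E ^ (1/q) * C * X ^ (1/q) * d4

lemma exp_algebra1 (la lb lα lβ q s t : ℝ) :
    (Real.exp la * Real.exp ((lb - la) * t)) ^ q
        * (((Real.exp lβ) ^ q) ^ (s*t+(1-s)) * ((Real.exp lα) ^ q) ^ (s*(1-t)))
      = (Real.exp la * (Real.exp lα) ^ s) ^ (q*(1-t))
        * ((Real.exp lb * (Real.exp lβ) ^ s) ^ (q*t)) * (Real.exp lβ) ^ (q*(1-s)) := by
  simp only [← Real.exp_add, ← Real.exp_mul, Real.exp_eq_exp]
  ring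

lemma exp_algebra2 (la lb lα lβ q s t : ℝ) :
    (Real.exp la * Real.exp ((lb - la) * (1-t))) ^ q
        * (((Real.exp lβ) ^ q) ^ (s*(1-t)+(1-s)) * ((Real.exp lα) ^ q) ^ (s*t))
      = (Real.exp lb * (Real.exp lβ) ^ s) ^ (q*(1-t))
        * ((Real.exp la * (Real.exp lα) ^ s) ^ (q*t)) * (Real.exp lβ) ^ (q*(1-s)) := by
  simp only [← Real.exp_add, ← Real.exp_mul, Real.exp_eq_exp]
  ring

set_option maxHeartbeats 2000000 in
theorem stmt_8
    (I : Set ℝ) (hI : I.OrdConnected) (hIpos : I ⊆ Set.Ioi (0:ℝ))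
    (f f' : ℝ → ℝ) (hfpos : ∀ x ∈ I, 0 < f x)
    (a b : ℝ) (ha : a ∈ interior I) (hb : b ∈ interior I) (hab : a < b)
    (hdiff : ∀ x ∈ interior I, HasDerivAt f (f' x) x)
    (hint : IntervalIntegrable f' volume a b)
    (q s : ℝ) (hq : 1 ≤ q) (hs : s ∈ Set.Ioc (0:ℝ) 1)
    (hconv : SGeometricallyConvexOn s (Set.Icc a b) (fun x => |f' x| ^ q))
    (hfa : |f' a| ≤ 1) (hfb : 1 ≤ |f' b|) :
    |f (Real.sqrt (a * b)) - (1 / (Real.log b - Real.log a)) * ∫ x in a..b, f x / x| ≤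
      Real.log (b / a) * (1 / 2 : ℝ) ^ (3 - 1 / q) *
        (a * |f' a| ^ s * |f' b| ^ (1 - s) * (g₁ ((b * |f' b| ^ s / (a * |f' a| ^ s)) ^ (q / 2))) ^ (1 / q)
         + b * |f' b| * (g₁ ((a * |f' a| ^ s / (b * |f' b| ^ s)) ^ (q / 2))) ^ (1 / q)) := by
  have hq0 : (0:ℝ) < q := by linarith
  have ha0 : (0:ℝ) < a := hIpos (interior_subset ha)
  have hb0 : (0:ℝ) < b := hIpos (interior_subset hb)
  have hL : (0:ℝ) < Real.log b - Real.log a := sub_pos.2 (Real.log_lt_log ha0 hab)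
  set L : ℝ := Real.log b - Real.log a with hL_def
  set A : ℝ → ℝ := fun t => a * Real.exp (L * t) with hA_def
  set α : ℝ := |f' a| with hα_def
  set β : ℝ := |f' b| with hβ_def
  have hα0 : 0 ≤ α := abs_nonneg _
  have hβ0 : (0:ℝ) < β := lt_of_lt_of_le one_pos hfb
  have hApos : ∀ t : ℝ, 0 < A t := fun t => mul_pos ha0 (Real.exp_pos _)
  have hAcont : Continuous A := by
    apply continuous_const.mul
    exact Real.continuous_exp.comp (continuous_const.mul continuous_id)
  have hA0 : A 0 = a := by simp [hA_def]
  have hA1 : A 1 = b := by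
    simp only [hA_def, mul_one, hL_def]
    rw [Real.exp_sub, Real.exp_log ha0, Real.exp_log hb0]
    field_simp
  have hmono : StrictMono A := by
    intro x y hxy
    exact mul_lt_mul_of_pos_left (Real.exp_lt_exp.2 (by nlinarith)) ha0
  have hmaps : ∀ t ∈ Icc (0:ℝ) 1, A t ∈ Icc a b := by
    intro t ht
    constructor
    · calc a = A 0 := hA0.symm
        _ ≤ A t := hmono.monotone ht.1
    · calc A t ≤ A 1 := hmono.monotone ht.2
        _ = b := hA1
  have hIccI : Icc a b ⊆ interior I := by
    have h1 : Convex ℝ I := convex_iff_ordConnected.mpr hI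
    exact h1.interior.ordConnected.out ha hb
  have hfc : ContinuousOn f (Icc a b) := fun x hx =>
    ((hdiff x (hIccI hx)).continuousAt).continuousWithinAt
  have hA' : ∀ t : ℝ, HasDerivAt A (L * A t) t := by
    intro t
    have h1 : HasDerivAt (fun u : ℝ => Real.exp (L*u)) (Real.exp (L*t) * L) t := by
      simpa using ((hasDerivAt_id t).const_mul L).exp
    have h2 := h1.const_mul a
    refine h2.congr_deriv ?_
    show a * (Real.exp (L*t) * L) = L * (a * Real.exp (L*t))
    ring
  have hA_rpow : ∀ t : ℝ, A t = b ^ t * a ^ (1-t) := by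
    intro t
    have e1 : a * Real.exp (L*t) = Real.exp (Real.log a + L*t) := by
      rw [Real.exp_add, Real.exp_log ha0]
    show a * Real.exp (L*t) = _
    rw [e1, Real.rpow_def_of_pos hb0, Real.rpow_def_of_pos ha0, ← Real.exp_add]
    congr 1
    simp only [hL_def]
    ring
  have hAhalf : A (1/2) = Real.sqrt (a*b) := by
    have e1 : a * Real.exp (L*(1/2)) = Real.exp ((Real.log a + Real.log b)/2) := by
      rw [← Real.exp_log ha0, ← Real.exp_add]
      congr 1
      simp only [hL_def, Real.log_exp]
      ring
    show a * Real.exp (L*(1/2)) = _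
    rw [e1, Real.sqrt_eq_rpow, Real.rpow_def_of_pos (mul_pos ha0 hb0),
      Real.log_mul ha0.ne' hb0.ne']
    congr 1
    ring
  -- substitution
  have hsubst : ∫ x in a..b, f x / x = L * ∫ t in (0:ℝ)..1, f (A t) := by
    have hderivs : ∀ t ∈ uIcc (0:ℝ) 1, HasDerivAt A (L * A t) t := fun t _ => hA' t
    have hcontA' : ContinuousOn (fun t => L * A t) (uIcc (0:ℝ) 1) :=
      (continuous_const.mul hAcont).continuousOn
    have himg : A '' uIcc (0:ℝ) 1 ⊆ Icc a b := by
      rw [uIcc_of_le (by norm_num : (0:ℝ) ≤ 1)]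
      exact image_subset_iff.2 hmaps
    have hg : ContinuousOn (fun x => f x / x) (A '' uIcc (0:ℝ) 1) := by
      apply ContinuousOn.mono _ himg
      apply hfc.div continuousOn_id
      intro x hx
      exact (lt_of_lt_of_le ha0 hx.1).ne'
    have key := intervalIntegral.integral_comp_smul_deriv' hderivs hcontA' hg
    rw [hA0, hA1] at key
    have e : ∫ t in (0:ℝ)..1, (L * A t) • ((fun x => f x / x) ∘ A) t
        = ∫ t in (0:ℝ)..1, L * f (A t) := by
      apply intervalIntegral.integral_congr
      intro t _
      have hAne : A t ≠ 0 := (hApos t).ne'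
      simp only [Function.comp_apply, smul_eq_mul]
      field_simp
    rw [e] at key
    rw [← key, intervalIntegral.integral_const_mul]
  -- derivative of f ∘ A
  set G : ℝ → ℝ := fun t => f' (A t) * (L * A t) with hG_def
  have hgd : ∀ t ∈ Icc (0:ℝ) 1, HasDerivAt (fun u => f (A u)) (G t) t := by
    intro t ht
    exact (hdiff (A t) (hIccI (hmaps t ht))).comp t (hA' t)
  -- integrability of G
  have hInt' : IntegrableOn f' (Icc a b) :=
    (intervalIntegrable_iff_integrableOn_Icc_of_le hab.le).mp hint
  have hGintOn : IntegrableOn G (Icc (0:ℝ) 1) := by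
    have himg : A '' Icc (0:ℝ) 1 ⊆ Icc a b := image_subset_iff.2 hmaps
    have h1 : IntegrableOn f' (A '' Icc (0:ℝ) 1) := hInt'.mono_set himg
    have h2 := (integrableOn_image_iff_integrableOn_abs_deriv_smul measurableSet_Icc
      (fun t _ => (hA' t).hasDerivWithinAt) (hmono.injective.injOn) f').mp h1
    apply h2.congr_fun _ measurableSet_Icc
    intro t _
    simp only [smul_eq_mul, hG_def]
    rw [abs_of_pos (mul_pos hL (hApos t))]
    ring
  have hGI : IntervalIntegrable G volume 0 1 :=
    (intervalIntegrable_iff_integrableOn_Icc_of_le (by norm_num)).mpr hGintOn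
  have hGI1 : IntervalIntegrable G volume 0 (1/2) := by
    apply hGI.mono_set
    rw [uIcc_of_le (by norm_num : (0:ℝ) ≤ 1/2), uIcc_of_le (by norm_num : (0:ℝ) ≤ 1)]
    exact Icc_subset_Icc (le_refl _) (by norm_num)
  have hGI2 : IntervalIntegrable G volume (1/2) 1 := by
    apply hGI.mono_set
    rw [uIcc_of_le (by norm_num : (1/2:ℝ) ≤ 1), uIcc_of_le (by norm_num : (0:ℝ) ≤ 1)]
    exact Icc_subset_Icc (by norm_num) (le_refl _)
  -- continuity of f ∘ A on [0,1]
  have hfAc : ContinuousOn (fun t => f (A t)) (Icc (0:ℝ) 1) :=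
    hfc.comp hAcont.continuousOn hmaps
  have hfAc1 : IntervalIntegrable (fun t => f (A t)) volume 0 (1/2) := by
    apply ContinuousOn.intervalIntegrable
    apply hfAc.mono
    rw [uIcc_of_le (by norm_num : (0:ℝ) ≤ 1/2)]
    exact Icc_subset_Icc (le_refl _) (by norm_num)
  have hfAc2 : IntervalIntegrable (fun t => f (A t)) volume (1/2) 1 := by
    apply ContinuousOn.intervalIntegrable
    apply hfAc.mono
    rw [uIcc_of_le (by norm_num : (1/2:ℝ) ≤ 1)]
    exact Icc_subset_Icc (by norm_num) (le_refl _)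
  -- integration by parts on [0, 1/2]
  have hsub1 : uIcc (0:ℝ) (1/2) ⊆ Icc (0:ℝ) 1 := by
    rw [uIcc_of_le (by norm_num : (0:ℝ) ≤ 1/2)]
    exact Icc_subset_Icc (le_refl _) (by norm_num)
  have hsub2 : uIcc (1/2:ℝ) 1 ⊆ Icc (0:ℝ) 1 := by
    rw [uIcc_of_le (by norm_num : (1/2:ℝ) ≤ 1)]
    exact Icc_subset_Icc (by norm_num) (le_refl _)
  have parts1 := intervalIntegral.integral_mul_deriv_eq_deriv_mul
    (u := fun t : ℝ => t) (u' := fun _ => (1:ℝ)) (v := fun t => f (A t)) (v' := G)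
    (a := (0:ℝ)) (b := 1/2)
    (fun x _ => hasDerivAt_id x) (fun x hx => hgd x (hsub1 hx))
    intervalIntegrable_const hGI1
  have parts2 := intervalIntegral.integral_mul_deriv_eq_deriv_mul
    (u := fun t : ℝ => t - 1) (u' := fun _ => (1:ℝ)) (v := fun t => f (A t)) (v' := G)
    (a := (1/2:ℝ)) (b := 1)
    (fun x _ => (hasDerivAt_id x).sub_const 1) (fun x hx => hgd x (hsub2 hx))
    intervalIntegrable_const hGI2
  simp only [one_mul] at parts1 parts2
  have hsplit : ∫ t in (0:ℝ)..1, f (A t)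
      = (∫ t in (0:ℝ)..(1/2), f (A t)) + ∫ t in (1/2:ℝ)..1, f (A t) :=
    (intervalIntegral.integral_add_adjacent_intervals hfAc1 hfAc2).symm
  have hiden : f (A (1/2)) - ∫ t in (0:ℝ)..1, f (A t)
      = (∫ t in (0:ℝ)..(1/2), t * G t) + ∫ t in (1/2:ℝ)..1, (t-1) * G t := by
    rw [parts1, parts2, hsplit]
    ring
  -- absolute value bounds
  have h1abs : |∫ t in (0:ℝ)..(1/2), t * G t|
      ≤ L * ∫ t in (0:ℝ)..(1/2), t * (A t * |f' (A t)|) := by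
    calc |∫ t in (0:ℝ)..(1/2), t * G t| ≤ ∫ t in (0:ℝ)..(1/2), |t * G t| :=
          intervalIntegral.abs_integral_le_integral_abs (by norm_num)
      _ = ∫ t in (0:ℝ)..(1/2), L * (t * (A t * |f' (A t)|)) := by
          apply intervalIntegral.integral_congr
          intro t ht
          rw [uIcc_of_le (by norm_num : (0:ℝ) ≤ 1/2)] at ht
          simp only [hG_def]
          rw [abs_mul, abs_mul, abs_of_nonneg ht.1, abs_of_pos (mul_pos hL (hApos t))]
          ring
      _ = L * ∫ t in (0:ℝ)..(1/2), t * (A t * |f' (A t)|) :=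
          intervalIntegral.integral_const_mul _ _
  have h2abs : |∫ t in (1/2:ℝ)..1, (t-1) * G t|
      ≤ L * ∫ t in (1/2:ℝ)..1, (1-t) * (A t * |f' (A t)|) := by
    calc |∫ t in (1/2:ℝ)..1, (t-1) * G t| ≤ ∫ t in (1/2:ℝ)..1, |(t-1) * G t| :=
          intervalIntegral.abs_integral_le_integral_abs (by norm_num)
      _ = ∫ t in (1/2:ℝ)..1, L * ((1-t) * (A t * |f' (A t)|)) := by
          apply intervalIntegral.integral_congr
          intro t ht
          rw [uIcc_of_le (by norm_num : (1/2:ℝ) ≤ 1)] at ht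
          simp only [hG_def]
          rw [abs_mul, abs_mul, abs_of_nonpos (by linarith [ht.2] : t - 1 ≤ 0),
            abs_of_pos (mul_pos hL (hApos t))]
          ring
      _ = L * ∫ t in (1/2:ℝ)..1, (1-t) * (A t * |f' (A t)|) :=
          intervalIntegral.integral_const_mul _ _
  -- reflection of the second integral
  have hrefl : ∫ t in (1/2:ℝ)..1, (1-t) * (A t * |f' (A t)|)
      = ∫ t in (0:ℝ)..(1/2), t * (A (1-t) * |f' (A (1-t))|) := by
    have h := intervalIntegral.integral_comp_sub_left (a := (1/2:ℝ)) (b := 1)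
      (fun x => x * (A (1-x) * |f' (A (1-x))|)) 1
    simp only [sub_sub_cancel] at h
    norm_num at h ⊢
    convert h using 2
  -- integrability of the weighted functions
  have hfun1 : (fun t : ℝ => t * (A t * |f' (A t)|)) = fun t => (t / L) * |G t| := by
    funext t
    simp only [hG_def]
    rw [abs_mul, abs_of_pos (mul_pos hL (hApos t))]
    field_simp
  have hj1 : IntervalIntegrable (fun t : ℝ => t * (A t * |f' (A t)|)) volume 0 (1/2) := by
    rw [hfun1]
    exact hGI1.abs.continuousOn_mul ((continuous_id.div_const L).continuousOn)
  have hfun2 : (fun t : ℝ => (1-t) * (A t * |f' (A t)|)) = fun t => ((1-t) / L) * |G t| := by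
    funext t
    simp only [hG_def]
    rw [abs_mul, abs_of_pos (mul_pos hL (hApos t))]
    field_simp
  have hj2' : IntervalIntegrable (fun t : ℝ => (1-t) * (A t * |f' (A t)|)) volume (1/2) 1 := by
    rw [hfun2]
    exact hGI2.abs.continuousOn_mul (((continuous_const.sub continuous_id).div_const L).continuousOn)
  have hj2 : IntervalIntegrable (fun t : ℝ => t * (A (1-t) * |f' (A (1-t))|)) volume 0 (1/2) := by
    have h := hj2'.comp_sub_left 1
    simp only [sub_sub_cancel] at h
    norm_num at h
    exact h.symm
  -- pointwise bounds
  have hβq : (1:ℝ) ≤ β^q := by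
    calc (1:ℝ) = (1:ℝ)^q := (Real.one_rpow q).symm
      _ ≤ β^q := Real.rpow_le_rpow zero_le_one hfb hq0.le
  have hbound1 : ∀ t ∈ Icc (0:ℝ) (1/2),
      (A t * |f' (A t)|) ^ q ≤ (a*α^s) ^ (q*(1-t)) * (b*β^s) ^ (q*t) * β^(q*(1-s)) := by
    intro t ht
    have ht1 : t ∈ Icc (0:ℝ) 1 := ⟨ht.1, by linarith [ht.2]⟩
    have h1mt : (0:ℝ) < 1 - t := by linarith [ht.2]
    have hconv' := hconv b (right_mem_Icc.2 hab.le) a (left_mem_Icc.2 hab.le) t ht1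
    simp only at hconv'
    rw [← hA_rpow t, ← hα_def, ← hβ_def] at hconv'
    have hts : t ^ s ≤ s*t + (1-s) := by
      have := Real.geom_mean_le_arith_mean2_weighted (w₁ := s) (w₂ := 1-s) (p₁ := t)
        (p₂ := 1) hs.1.le (by linarith [hs.2]) ht1.1 zero_le_one (by ring)
      simpa using this
    have hst : s*(1-t) ≤ (1-t)^s := by
      have h1 : (1-t) ≤ (1-t)^s := by
        calc (1-t) = (1-t)^(1:ℝ) := (Real.rpow_one _).symm
          _ ≤ (1-t)^s := Real.rpow_le_rpow_of_exponent_ge h1mt (by linarith [ht1.1]) hs.2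
      nlinarith [hs.2, hs.1]
    have e1 : (β^q)^(t^s) ≤ (β^q)^(s*t+(1-s)) := Real.rpow_le_rpow_of_exponent_le hβq hts
    have e2 : (α^q)^((1-t)^s) ≤ (α^q)^(s*(1-t)) := by
      rcases eq_or_lt_of_le hα0 with h0 | hαpos
      · rw [← h0, Real.zero_rpow hq0.ne',
          Real.zero_rpow (Real.rpow_pos_of_pos h1mt s).ne',
          Real.zero_rpow (mul_pos hs.1 h1mt).ne']
      · exact Real.rpow_le_rpow_of_exponent_ge (Real.rpow_pos_of_pos hαpos q)
          (Real.rpow_le_one hα0 hfa hq0.le) hst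
    have hfq : |f' (A t)|^q ≤ (β^q)^(s*t+(1-s)) * (α^q)^(s*(1-t)) :=
      le_trans hconv' (mul_le_mul e1 e2
        (Real.rpow_nonneg (Real.rpow_nonneg hα0 q) _)
        (Real.rpow_nonneg (Real.rpow_nonneg (abs_nonneg _) q) _))
    have hcomb : (A t * |f' (A t)|)^q
        ≤ (A t)^q * ((β^q)^(s*t+(1-s)) * (α^q)^(s*(1-t))) := by
      rw [Real.mul_rpow (hApos t).le (abs_nonneg _)]
      exact mul_le_mul_of_nonneg_left hfq (Real.rpow_nonneg (hApos t).le q)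
    refine le_trans hcomb (le_of_eq ?_)
    rcases eq_or_lt_of_le hα0 with h0 | hαpos
    · rw [← h0, Real.zero_rpow hq0.ne',
        Real.zero_rpow (mul_pos hs.1 h1mt).ne', mul_zero, mul_zero,
        Real.zero_rpow hs.1.ne', mul_zero,
        Real.zero_rpow (mul_pos hq0 h1mt).ne', zero_mul, zero_mul]
    · have h := exp_algebra1 (Real.log a) (Real.log b) (Real.log α) (Real.log β) q s t
      rw [Real.exp_log ha0, Real.exp_log hb0, Real.exp_log hαpos, Real.exp_log hβ0,
        ← hL_def] at h
      simp only [hA_def]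
      exact h
  have hbound2 : ∀ t ∈ Icc (0:ℝ) (1/2),
      (A (1-t) * |f' (A (1-t))|) ^ q
        ≤ (b*β^s) ^ (q*(1-t)) * (a*α^s) ^ (q*t) * β^(q*(1-s)) := by
    intro t ht
    have ht1 : (1-t) ∈ Icc (0:ℝ) 1 := ⟨by linarith [ht.2], by linarith [ht.1]⟩
    have hA1t : A (1-t) = b ^ (1-t) * a ^ t := by
      rw [hA_rpow (1-t), sub_sub_cancel]
    have hconv' := hconv b (right_mem_Icc.2 hab.le) a (left_mem_Icc.2 hab.le) (1-t) ht1
    simp only [sub_sub_cancel] at hconv'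
    rw [← hA1t, ← hα_def, ← hβ_def] at hconv'
    have hts : (1-t) ^ s ≤ s*(1-t) + (1-s) := by
      have := Real.geom_mean_le_arith_mean2_weighted (w₁ := s) (w₂ := 1-s) (p₁ := 1-t)
        (p₂ := 1) hs.1.le (by linarith [hs.2]) ht1.1 zero_le_one (by ring)
      simpa using this
    have e1 : (β^q)^((1-t)^s) ≤ (β^q)^(s*(1-t)+(1-s)) :=
      Real.rpow_le_rpow_of_exponent_le hβq hts
    have e2 : (α^q)^(t^s) ≤ (α^q)^(s*t) := by
      rcases eq_or_lt_of_le ht.1 with rfl | htpos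
      · rw [Real.zero_rpow hs.1.ne', mul_zero]
      · have hst : s*t ≤ t^s := by
          have h1 : t ≤ t^s := by
            calc t = t^(1:ℝ) := (Real.rpow_one _).symm
              _ ≤ t^s := Real.rpow_le_rpow_of_exponent_ge htpos (by linarith [ht.2]) hs.2
          nlinarith [hs.2, hs.1]
        rcases eq_or_lt_of_le hα0 with h0 | hαpos
        · rw [← h0, Real.zero_rpow hq0.ne',
            Real.zero_rpow (Real.rpow_pos_of_pos htpos s).ne',
            Real.zero_rpow (mul_pos hs.1 htpos).ne']
        · exact Real.rpow_le_rpow_of_exponent_ge (Real.rpow_pos_of_pos hαpos q)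
            (Real.rpow_le_one hα0 hfa hq0.le) hst
    have hfq : |f' (A (1-t))|^q ≤ (β^q)^(s*(1-t)+(1-s)) * (α^q)^(s*t) :=
      le_trans hconv' (mul_le_mul e1 e2
        (Real.rpow_nonneg (Real.rpow_nonneg hα0 q) _)
        (Real.rpow_nonneg (Real.rpow_nonneg (abs_nonneg _) q) _))
    have hcomb : (A (1-t) * |f' (A (1-t))|)^q
        ≤ (A (1-t))^q * ((β^q)^(s*(1-t)+(1-s)) * (α^q)^(s*t)) := by
      rw [Real.mul_rpow (hApos _).le (abs_nonneg _)]
      exact mul_le_mul_of_nonneg_left hfq (Real.rpow_nonneg (hApos _).le q)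
    refine le_trans hcomb (le_of_eq ?_)
    rcases eq_or_lt_of_le hα0 with h0 | hαpos
    · rcases eq_or_lt_of_le ht.1 with rfl | htpos
      · rw [show s*(1-(0:ℝ))+(1-s) = 1 by ring, show s*(0:ℝ) = 0 by ring,
          show q*(1-(0:ℝ)) = q by ring, show q*(0:ℝ) = 0 by ring,
          Real.rpow_zero, Real.rpow_zero, Real.rpow_one, mul_one, mul_one, sub_zero, hA1]
        rw [Real.mul_rpow hb0.le (Real.rpow_nonneg hβ0.le s), ← Real.rpow_mul hβ0.le,
          mul_assoc, ← Real.rpow_add hβ0, show s*q + q*(1-s) = q by ring]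
      · rw [← h0, Real.zero_rpow hq0.ne',
          Real.zero_rpow (mul_pos hs.1 htpos).ne', mul_zero, mul_zero,
          Real.zero_rpow hs.1.ne', mul_zero,
          Real.zero_rpow (mul_pos hq0 htpos).ne', mul_zero, zero_mul]
    · have h := exp_algebra2 (Real.log a) (Real.log b) (Real.log α) (Real.log β) q s t
      rw [Real.exp_log ha0, Real.exp_log hb0, Real.exp_log hαpos, Real.exp_log hβ0,
        ← hL_def] at h
      simp only [hA_def]
      exact h
  -- apply the master estimate
  have hE : (0:ℝ) < β^(q*(1-s)) := Real.rpow_pos_of_pos hβ0 _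
  have hC1 : (0:ℝ) ≤ a*α^s := mul_nonneg ha0.le (Real.rpow_nonneg hα0 s)
  have hD1 : (0:ℝ) ≤ b*β^s := mul_nonneg hb0.le (Real.rpow_nonneg hβ0.le s)
  have hnn1 : ∀ t ∈ Icc (0:ℝ) (1/2), 0 ≤ A t * |f' (A t)| :=
    fun t _ => mul_nonneg (hApos t).le (abs_nonneg _)
  have hnn2 : ∀ t ∈ Icc (0:ℝ) (1/2), 0 ≤ A (1-t) * |f' (A (1-t))| :=
    fun t _ => mul_nonneg (hApos _).le (abs_nonneg _)
  have key1 := master hq (a*α^s) (b*β^s) (β^(q*(1-s))) hC1 hD1 hE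
    (fun t => A t * |f' (A t)|) hj1 hnn1 hbound1
  have key2 := master hq (b*β^s) (a*α^s) (β^(q*(1-s))) hD1 hC1 hE
    (fun t => A (1-t) * |f' (A (1-t))|) hj2 hnn2 hbound2
  have hE1q : (β^(q*(1-s)))^(1/q) = β^(1-s) := by
    rw [← Real.rpow_mul hβ0.le]
    congr 1
    field_simp
  rw [hE1q] at key1 key2
  -- assemble
  have hmain : |f (A (1/2)) - ∫ t in (0:ℝ)..1, f (A t)|
      ≤ L * (∫ t in (0:ℝ)..(1/2), t * (A t * |f' (A t)|))
        + L * (∫ t in (0:ℝ)..(1/2), t * (A (1-t) * |f' (A (1-t))|)) := by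
    rw [hiden]
    calc |(∫ t in (0:ℝ)..(1/2), t * G t) + ∫ t in (1/2:ℝ)..1, (t-1) * G t|
        ≤ |∫ t in (0:ℝ)..(1/2), t * G t| + |∫ t in (1/2:ℝ)..1, (t-1) * G t| := abs_add_le _ _
      _ ≤ _ := by
          rw [hrefl] at h2abs
          exact add_le_add h1abs h2abs
  have hgoalLHS : f (Real.sqrt (a*b)) - (1 / L) * ∫ x in a..b, f x / x
      = f (A (1/2)) - ∫ t in (0:ℝ)..1, f (A t) := by
    rw [← hAhalf, hsubst]
    congr 1
    field_simp
  have hββ : β^s * β^(1-s) = β := by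
    rw [← Real.rpow_add hβ0, show s + (1-s) = 1 by ring, Real.rpow_one]
  have hlog : Real.log (b/a) = L := by
    rw [Real.log_div hb0.ne' ha0.ne']
  calc |f (Real.sqrt (a*b)) - (1 / L) * ∫ x in a..b, f x / x|
      = |f (A (1/2)) - ∫ t in (0:ℝ)..1, f (A t)| := by rw [hgoalLHS]
    _ ≤ L * (∫ t in (0:ℝ)..(1/2), t * (A t * |f' (A t)|))
        + L * (∫ t in (0:ℝ)..(1/2), t * (A (1-t) * |f' (A (1-t))|)) := hmain
    _ ≤ L * ((1/2 : ℝ) ^ (3 - 1/q) * ((a*α^s) * (β^(1-s)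
            * g₁ ((b*β^s / (a*α^s)) ^ (q/2)) ^ (1/q))))
        + L * ((1/2 : ℝ) ^ (3 - 1/q) * ((b*β^s) * (β^(1-s)
            * g₁ ((a*α^s / (b*β^s)) ^ (q/2)) ^ (1/q)))) :=
        add_le_add (mul_le_mul_of_nonneg_left key1 hL.le)
          (mul_le_mul_of_nonneg_left key2 hL.le)
    _ = Real.log (b / a) * (1 / 2 : ℝ) ^ (3 - 1 / q) *
        (a * α ^ s * β ^ (1 - s) * (g₁ ((b * β ^ s / (a * α ^ s)) ^ (q / 2))) ^ (1 / q)
         + b * β * (g₁ ((a * α ^ s / (b * β ^ s)) ^ (q / 2))) ^ (1 / q)) := by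
        rw [hlog]
        linear_combination (L * ((1/2 : ℝ) ^ (3 - 1/q)) * b
          * (g₁ ((a*α^s / (b*β^s)) ^ (q/2))) ^ (1/q)) * hββ
end

section
/- Let f : I ⊆ (0,∞) → (0,∞) be differentiable on I°, let a, b ∈ I° with a < b, f' integrable on [a,b], and suppose |f'|^q is s-geometrically convex on [a,b] for some q ≥ 1 and s ∈ (0,1]. If |f'(b)| ≤ 1 ≤ |f'(a)|, then |f(√(ab)) − (1/(ln b − ln a)) ∫_a^b f(x)/x dx| ≤ ln(b/a) · (1/2)^{3−1/q} · [ a|f'(a)| g₁(θ₃)^{1/q} + b|f'(b)|^s |f'(a)|^{1−s} g₁(θ₄)^{1/q} ]. -/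
open Real MeasureTheory Set

lemma aux_young {x s : ℝ} (hx : 0 ≤ x) (hs0 : 0 ≤ s) (hs1 : s ≤ 1) :
    x ^ s ≤ s * x + (1 - s) := by
  have := Real.geom_mean_le_arith_mean2_weighted hs0 (by linarith : (0:ℝ) ≤ 1 - s)
    hx zero_le_one (by ring)
  simpa using this

lemma aux_tpow {t s : ℝ} (ht0 : 0 ≤ t) (ht1 : t ≤ 1) (hs0 : 0 < s) (hs1 : s ≤ 1) :
    s * t ≤ t ^ s := by
  rcases eq_or_lt_of_le ht0 with h | h
  · simp [← h, Real.zero_rpow hs0.ne']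
  · calc s * t ≤ 1 * t := by nlinarith
    _ = t ^ (1:ℝ) := by rw [Real.rpow_one]; ring
    _ ≤ t ^ s := Real.rpow_le_rpow_of_exponent_ge h ht1 hs1

lemma rpow_q_root {x q : ℝ} (hx : 0 ≤ x) (hq : q ≠ 0) : (x ^ q) ^ (1/q) = x := by
  rw [← Real.rpow_mul hx, mul_one_div, div_self hq, Real.rpow_one]

lemma cont_crpow {c : ℝ} (hc : c ≠ 0) : Continuous (fun t : ℝ => c ^ t) :=
  continuous_iff_continuousAt.2 fun _ => Real.continuousAt_const_rpow hc

lemma Jlem {c : ℝ} (hc : 0 < c) :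
    ∫ t in (0:ℝ)..(1/2), t * c ^ (2*t) = g₁ c / 4 := by
  have hder : ∀ t : ℝ, HasDerivAt (fun u => c ^ (2*u)) (c ^ (2*t) * Real.log c * 2) t := by
    intro t
    have h1 : HasDerivAt (fun u : ℝ => 2*u) 2 t := by
      simpa using (hasDerivAt_id t).const_mul 2
    exact ((Real.hasStrictDerivAt_const_rpow hc (2*t)).hasDerivAt).comp t h1
  rcases eq_or_ne c 1 with rfl | hc1
  · have : ∀ t ∈ Set.uIcc (0:ℝ) (1/2), t * (1:ℝ) ^ (2*t) = t := fun t _ => by simp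
    rw [intervalIntegral.integral_congr this, integral_id]
    norm_num [g₁]
  · have hlc : Real.log c ≠ 0 := Real.log_ne_zero_of_pos_of_ne_one hc hc1
    set L := Real.log c with hL
    have hG : ∀ t : ℝ, HasDerivAt
        (fun u => u * c ^ (2*u) / (2*L) - c ^ (2*u) / (4*L^2))
        (t * c ^ (2*t)) t := by
      intro t
      have h1 : HasDerivAt (fun u : ℝ => u * c ^ (2*u))
          (1 * c ^ (2*t) + t * (c ^ (2*t) * L * 2)) t :=
        (hasDerivAt_id t).mul (hder t)
      have h2 := (h1.div_const (2*L)).sub ((hder t).div_const (4*L^2))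
      refine h2.congr_deriv ?_
      field_simp
      ring
    rw [intervalIntegral.integral_eq_sub_of_hasDerivAt (fun t _ => hG t)
      ((continuous_id.mul ((cont_crpow hc.ne').comp
        (continuous_const.mul continuous_id))).continuousOn.intervalIntegrable)]
    have hc1' : c ^ (2 * (1/2 : ℝ)) = c := by norm_num
    have hc0' : c ^ (2 * (0 : ℝ)) = 1 := by norm_num
    rw [hc1', hc0']
    simp only [g₁, if_neg hc1]
    rw [← hL]
    field_simp
    ring

lemma g₁_nonneg_s9 {c : ℝ} (hc : 0 < c) : 0 ≤ g₁ c := by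
  rcases eq_or_ne c 1 with rfl | hc1
  · norm_num [g₁]
  · rw [g₁, if_neg hc1]
    refine div_nonneg ?_ (sq_nonneg _)
    have h1 : Real.log c⁻¹ ≤ c⁻¹ - 1 := Real.log_le_sub_one_of_pos (by positivity)
    rw [Real.log_inv] at h1
    have hc' : 0 < c⁻¹ := by positivity
    nlinarith [mul_le_mul_of_nonneg_left h1 hc.le, mul_inv_cancel₀ hc.ne']

lemma assemble {L C g q : ℝ} (hL : 0 < L) (hC : 0 ≤ C) (hg : 0 ≤ g) (hq : 1 ≤ q) :
    (L^2/8)^(1-1/q) * (L^2 * C^q * (g/4))^(1/q)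
      = L^2 * ((1/2:ℝ)^(3-1/q) * (C * g^(1/q))) := by
  have hq0 : (0:ℝ) < q := lt_of_lt_of_le one_pos hq
  have h2 : (0:ℝ) < L^2 := by positivity
  rw [show L^2/8 = L^2 * (1/8) by ring,
    show L^2*C^q*(g/4) = L^2 * (C^q * (g * (1/4))) by ring,
    Real.mul_rpow h2.le (by norm_num), Real.mul_rpow h2.le (by positivity),
    Real.mul_rpow (Real.rpow_nonneg hC _) (by positivity),
    Real.mul_rpow hg (by norm_num), rpow_q_root hC hq0.ne']
  have e1 : (L^2)^(1-1/q) * (L^2)^(1/q) = L^2 := by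
    rw [← Real.rpow_add h2]
    norm_num
  have e2 : ((1:ℝ)/8)^(1-1/q) * ((1:ℝ)/4)^(1/q) = (1/2:ℝ)^(3-1/q) := by
    rw [show (1:ℝ)/8 = ((1:ℝ)/2)^(3:ℝ) by
        rw [show (3:ℝ)=((3:ℕ):ℝ) by norm_num, Real.rpow_natCast]; norm_num,
      show (1:ℝ)/4 = ((1:ℝ)/2)^(2:ℝ) by
        rw [show (2:ℝ)=((2:ℕ):ℝ) by norm_num, Real.rpow_natCast]; norm_num,
      ← Real.rpow_mul (by norm_num), ← Real.rpow_mul (by norm_num),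
      ← Real.rpow_add (by norm_num)]
    congr 1
    field_simp
    ring
  conv_rhs => rw [← e1, ← e2]
  ring

/-- Weighted power-mean / Hölder inequality for bounded functions on a finite measure. -/
lemma weighted_holder {μ : Measure ℝ} [IsFiniteMeasure μ] {w h : ℝ → ℝ} {q : ℝ} (hq : 1 ≤ q)
    (hw0 : ∀ᵐ x ∂μ, 0 ≤ w x) (hh0 : ∀ᵐ x ∂μ, 0 ≤ h x)
    (hwm : AEStronglyMeasurable w μ) (hhm : AEStronglyMeasurable h μ)
    {Cw Ch : ℝ} (hCw : 0 ≤ Cw) (hCh : 0 ≤ Ch)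
    (hwb : ∀ᵐ x ∂μ, w x ≤ Cw) (hhb : ∀ᵐ x ∂μ, h x ≤ Ch) :
    ∫ x, w x * h x ∂μ ≤ (∫ x, w x ∂μ) ^ (1 - 1/q) * (∫ x, w x * h x ^ q ∂μ) ^ (1/q) := by
  rcases eq_or_lt_of_le hq with rfl | hq1
  · simp only [one_div, inv_one, sub_self, Real.rpow_zero, Real.rpow_one, one_mul]
    exact le_rfl
  · set p : ℝ := q / (q - 1) with hp
    have hq0 : (0:ℝ) < q := lt_trans one_pos hq1
    have hpq : p.HolderConjugate q := by
      rw [Real.holderConjugate_iff]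
      constructor
      · rw [hp]; rw [lt_div_iff₀ (by linarith)]; linarith
      · rw [hp]; rw [inv_div]; field_simp; ring
    have hppos : 0 < p := lt_trans one_pos hpq.lt
    have hsum : 1/p + 1/q = 1 := by rw [one_div, one_div]; exact hpq.inv_add_inv_eq_one
    set F : ℝ → ℝ := fun x => w x ^ (1/p)
    set G : ℝ → ℝ := fun x => w x ^ (1/q) * h x
    have hFm : AEStronglyMeasurable F μ :=
      (Real.continuous_rpow_const (by positivity)).comp_aestronglyMeasurable hwm
    have hGm : AEStronglyMeasurable G μ :=
      ((Real.continuous_rpow_const (by positivity)).comp_aestronglyMeasurable hwm).mul hhm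
    have hF : MemLp F (ENNReal.ofReal p) μ := by
      refine MemLp.of_bound hFm (Cw ^ (1/p)) ?_
      filter_upwards [hw0, hwb] with x h0 h1
      rw [Real.norm_of_nonneg (Real.rpow_nonneg h0 _)]
      exact Real.rpow_le_rpow h0 h1 (by positivity)
    have hG : MemLp G (ENNReal.ofReal q) μ := by
      refine MemLp.of_bound hGm (Cw ^ (1/q) * Ch) ?_
      filter_upwards [hw0, hwb, hh0, hhb] with x h0 h1 h2 h3
      rw [Real.norm_of_nonneg (mul_nonneg (Real.rpow_nonneg h0 _) h2)]
      exact mul_le_mul (Real.rpow_le_rpow h0 h1 (by positivity)) h3 h2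
        (Real.rpow_nonneg hCw _)
    have hF0 : 0 ≤ᵐ[μ] F := by filter_upwards [hw0] with x h0 using Real.rpow_nonneg h0 _
    have hG0 : 0 ≤ᵐ[μ] G := by
      filter_upwards [hw0, hh0] with x h0 h2 using mul_nonneg (Real.rpow_nonneg h0 _) h2
    have key := MeasureTheory.integral_mul_le_Lp_mul_Lq_of_nonneg hpq hF0 hG0 hF hG
    have e1 : ∫ x, F x * G x ∂μ = ∫ x, w x * h x ∂μ := by
      refine integral_congr_ae ?_
      filter_upwards [hw0] with x h0
      show w x ^ (1/p) * (w x ^ (1/q) * h x) = w x * h x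
      rw [← mul_assoc, ← Real.rpow_add' h0 (by rw [hsum]; norm_num), hsum, Real.rpow_one]
    have e2 : ∫ x, F x ^ p ∂μ = ∫ x, w x ∂μ := by
      refine integral_congr_ae ?_
      filter_upwards [hw0] with x h0
      show (w x ^ (1/p)) ^ p = w x
      rw [← Real.rpow_mul h0, one_div, inv_mul_cancel₀ hppos.ne', Real.rpow_one]
    have e3 : ∫ x, G x ^ q ∂μ = ∫ x, w x * h x ^ q ∂μ := by
      refine integral_congr_ae ?_
      filter_upwards [hw0, hh0] with x h0 h2
      show (w x ^ (1/q) * h x) ^ q = w x * h x ^ q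
      rw [Real.mul_rpow (Real.rpow_nonneg h0 _) h2, ← Real.rpow_mul h0, one_div,
        inv_mul_cancel₀ hq0.ne', Real.rpow_one]
    rw [e1, e2, e3] at key
    have hpq' : 1/p = 1 - 1/q := by linarith
    rw [hpq'] at key
    exact key

set_option maxHeartbeats 2000000

theorem stmt_9
    (I : Set ℝ) (hI : I.OrdConnected) (hIpos : I ⊆ Set.Ioi (0:ℝ))
    (f f' : ℝ → ℝ) (hfpos : ∀ x ∈ I, 0 < f x)
    (a b : ℝ) (ha : a ∈ interior I) (hb : b ∈ interior I) (hab : a < b)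
    (hdiff : ∀ x ∈ interior I, HasDerivAt f (f' x) x)
    (hint : IntervalIntegrable f' volume a b)
    (q s : ℝ) (hq : 1 ≤ q) (hs : s ∈ Set.Ioc (0:ℝ) 1)
    (hconv : SGeometricallyConvexOn s (Set.Icc a b) (fun x => |f' x| ^ q))
    (hfb : |f' b| ≤ 1) (hfa : 1 ≤ |f' a|) :
    |f (Real.sqrt (a * b)) - (1 / (Real.log b - Real.log a)) * ∫ x in a..b, f x / x| ≤
      Real.log (b / a) * (1 / 2 : ℝ) ^ (3 - 1 / q) *
        (a * |f' a| * (g₁ ((b * |f' b| ^ s / (a * |f' a| ^ s)) ^ (q / 2))) ^ (1 / q)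
         + b * |f' b| ^ s * |f' a| ^ (1 - s) * (g₁ ((a * |f' a| ^ s / (b * |f' b| ^ s)) ^ (q / 2))) ^ (1 / q)) := by
  obtain ⟨hs0, hs1⟩ := hs
  have ha0 : 0 < a := hIpos (interior_subset ha)
  have hb0 : 0 < b := hIpos (interior_subset hb)
  have hIab : Set.Icc a b ⊆ interior I := (hI.interior).out ha hb
  set A := |f' a| with hAdef
  set B := |f' b| with hBdef
  have hA1 : 1 ≤ A := hfa
  have hA0 : 0 < A := lt_of_lt_of_le one_pos hfa
  have hB0 : 0 ≤ B := abs_nonneg _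
  have hB1 : B ≤ 1 := hfb
  have hq0 : (0:ℝ) < q := lt_of_lt_of_le one_pos hq
  set L := Real.log b - Real.log a with hLdef
  have hL0 : 0 < L := sub_pos.2 (Real.log_lt_log ha0 hab)
  set M := Real.sqrt (a * b) with hMdef
  have hM0 : 0 < M := Real.sqrt_pos.2 (by positivity)
  have hlogM : Real.log M = (Real.log a + Real.log b) / 2 := by
    rw [hMdef, Real.log_sqrt (by positivity), Real.log_mul ha0.ne' hb0.ne']
  have haM : a < M := by
    rw [hMdef]
    exact (Real.lt_sqrt ha0.le).2 (by nlinarith)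
  have hMb : M < b := by
    rw [hMdef]
    exact (Real.sqrt_lt' hb0).2 (by nlinarith)
  have hcf : ContinuousOn f (Set.Icc a b) := fun x hx =>
    ((hdiff x (hIab hx)).continuousAt).continuousWithinAt
  have hLba : Real.log (b / a) = L := Real.log_div hb0.ne' ha0.ne'
  set c₁ := (b * B ^ s / (a * A ^ s)) ^ (q / 2) with hc₁
  set c₂ := (a * A ^ s / (b * B ^ s)) ^ (q / 2) with hc₂
  rw [hLba]
  rcases eq_or_lt_of_le hB0 with hB | hB
  · -- degenerate case B = 0
    have hB0' : B = 0 := hB.symm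
    have hBs : B ^ s = 0 := by rw [hB0', Real.zero_rpow hs0.ne']
    have hc₁0 : c₁ = 0 := by
      rw [hc₁, hBs, mul_zero, zero_div, Real.zero_rpow (by positivity : q/2 ≠ 0)]
    have hg₁0 : g₁ (0:ℝ) = 0 := by
      rw [g₁]
      norm_num [Real.log_zero]
    have hder0 : ∀ x ∈ Set.Ioc a b, f' x = 0 := by
      intro x hx
      have hx0 : 0 < x := lt_trans ha0 hx.1
      set t := (Real.log x - Real.log a) / L with htdef
      have hla : Real.log a < Real.log x := Real.log_lt_log ha0 hx.1
      have hlb : Real.log x ≤ Real.log b := (Real.log_le_log_iff hx0 hb0).2 hx.2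
      have ht0 : 0 < t := div_pos (by linarith) hL0
      have ht1 : t ≤ 1 := by
        rw [htdef, div_le_one hL0, hLdef]; linarith
      have htL : t * L = Real.log x - Real.log a := by
        rw [htdef]; field_simp
      have hxe : b ^ t * a ^ (1 - t) = x := by
        rw [Real.rpow_def_of_pos hb0, Real.rpow_def_of_pos ha0, ← Real.exp_add,
          ← Real.exp_log hx0]
        congr 1
        rw [hLdef] at htL
        nlinarith [htL]
      have hc := hconv b (Set.right_mem_Icc.2 hab.le) a (Set.left_mem_Icc.2 hab.le) t
        ⟨ht0.le, ht1⟩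
      simp only [] at hc
      rw [hxe, show |f' b| = (0:ℝ) from hB0', Real.zero_rpow hq0.ne',
        Real.zero_rpow (Real.rpow_pos_of_pos ht0 s).ne', zero_mul] at hc
      have h0 : |f' x| ^ q = 0 :=
        le_antisymm hc (Real.rpow_nonneg (abs_nonneg _) _)
      have := (Real.rpow_eq_zero (abs_nonneg _) hq0.ne').1 h0
      exact abs_eq_zero.1 this
    have hconst : ∀ x ∈ Set.Icc a b, f x = f b := by
      intro x hx
      rcases eq_or_lt_of_le hx.2 with h | h
      · rw [h]
      · obtain ⟨c, hcmem, hceq⟩ := exists_hasDerivAt_eq_slope f f' h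
          (hcf.mono (Set.Icc_subset_Icc hx.1 le_rfl))
          (fun y hy => hdiff y (hIab ⟨(hx.1.trans hy.1.le), hy.2.le⟩))
        rw [hder0 c ⟨lt_of_le_of_lt hx.1 hcmem.1, hcmem.2.le⟩] at hceq
        have := div_eq_zero_iff.1 hceq.symm
        rcases this with h1 | h2
        · linarith
        · exfalso; exact (sub_ne_zero.2 h.ne') h2
    have hintfb : ∫ x in a..b, f x / x = f b * L := by
      have e : ∀ x ∈ Set.uIcc a b, f x / x = f b * x⁻¹ := by
        intro x hx
        rw [Set.uIcc_of_le hab.le] at hx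
        rw [hconst x hx, div_eq_mul_inv]
      rw [intervalIntegral.integral_congr e, intervalIntegral.integral_const_mul,
        integral_inv_of_pos ha0 hb0, hLba]
    have hfM : f M = f b := hconst M ⟨haM.le, hMb.le⟩
    rw [hintfb, hfM, show f b - 1/L * (f b * L) = 0 by field_simp; ring, abs_zero,
      hc₁0, hg₁0, hBs, Real.zero_rpow (by positivity : (1:ℝ)/q ≠ 0)]
    have : (0:ℝ) ≤ L * (1/2:ℝ)^(3-1/q) := by positivity
    nlinarith [this]
  · -- main case B > 0
    have hbound : ∀ x ∈ Set.Icc a b,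
        |f' x| ≤ B ^ (s * ((Real.log x - Real.log a) / L)) *
          A ^ (1 - s * ((Real.log x - Real.log a) / L)) := by
      intro x hx
      have hx0 : 0 < x := lt_of_lt_of_le ha0 hx.1
      set t := (Real.log x - Real.log a) / L with htdef
      have hla : Real.log a ≤ Real.log x := (Real.log_le_log_iff ha0 hx0).2 hx.1
      have hlb : Real.log x ≤ Real.log b := (Real.log_le_log_iff hx0 hb0).2 hx.2
      have ht0 : 0 ≤ t := div_nonneg (by linarith) hL0.le
      have ht1 : t ≤ 1 := by
        rw [htdef, div_le_one hL0, hLdef]; linarith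
      have htL : t * L = Real.log x - Real.log a := by
        rw [htdef]; field_simp
      have hxe : b ^ t * a ^ (1 - t) = x := by
        rw [Real.rpow_def_of_pos hb0, Real.rpow_def_of_pos ha0, ← Real.exp_add,
          ← Real.exp_log hx0]
        congr 1
        rw [hLdef] at htL
        nlinarith [htL]
      have hc := hconv b (Set.right_mem_Icc.2 hab.le) a (Set.left_mem_Icc.2 hab.le) t ⟨ht0, ht1⟩
      simp only [] at hc
      rw [hxe] at hc
      have h1 : (B ^ q) ^ t ^ s ≤ B ^ (q * (s * t)) := by
        rw [← Real.rpow_mul hB0]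
        exact Real.rpow_le_rpow_of_exponent_ge hB hB1
          (mul_le_mul_of_nonneg_left (aux_tpow ht0 ht1 hs0 hs1) hq0.le)
      have h2 : (A ^ q) ^ (1 - t) ^ s ≤ A ^ (q * (1 - s * t)) := by
        rw [← Real.rpow_mul hA0.le]
        refine Real.rpow_le_rpow_of_exponent_le hA1 (mul_le_mul_of_nonneg_left ?_ hq0.le)
        have := aux_young (x := 1 - t) (by linarith) hs0.le hs1
        linarith
      have h3 : |f' x| ^ q ≤ (B ^ (s * t) * A ^ (1 - s * t)) ^ q := by
        calc |f' x| ^ q ≤ (B ^ q) ^ t ^ s * (A ^ q) ^ (1 - t) ^ s := hc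
        _ ≤ B ^ (q * (s * t)) * A ^ (q * (1 - s * t)) :=
            mul_le_mul h1 h2 (Real.rpow_nonneg (Real.rpow_nonneg hA0.le _) _)
              (Real.rpow_nonneg hB0 _)
        _ = (B ^ (s * t) * A ^ (1 - s * t)) ^ q := by
            rw [Real.mul_rpow (Real.rpow_nonneg hB0 _) (Real.rpow_nonneg hA0.le _),
              ← Real.rpow_mul hB0, ← Real.rpow_mul hA0.le]
            ring_nf
      have h4 := Real.rpow_le_rpow (Real.rpow_nonneg (abs_nonneg _) q) h3 (by positivity : (0:ℝ) ≤ 1/q)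
      rwa [rpow_q_root (abs_nonneg _) hq0.ne',
        rpow_q_root (mul_nonneg (Real.rpow_nonneg hB0 _) (Real.rpow_nonneg hA0.le _)) hq0.ne'] at h4
    have hbA : ∀ x ∈ Set.Icc a b, |f' x| ≤ A := by
      intro x hx
      have hx0 : 0 < x := lt_of_lt_of_le ha0 hx.1
      have hla : Real.log a ≤ Real.log x := (Real.log_le_log_iff ha0 hx0).2 hx.1
      have ht0 : 0 ≤ (Real.log x - Real.log a) / L := div_nonneg (by linarith) hL0.le
      calc |f' x| ≤ B ^ (s * ((Real.log x - Real.log a) / L)) *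
          A ^ (1 - s * ((Real.log x - Real.log a) / L)) := hbound x hx
      _ ≤ 1 * A ^ (1:ℝ) := by
          refine mul_le_mul (Real.rpow_le_one hB0 hB1 (by positivity)) ?_
            (Real.rpow_nonneg hA0.le _) zero_le_one
          exact Real.rpow_le_rpow_of_exponent_le hA1 (by nlinarith)
      _ = A := by rw [one_mul, Real.rpow_one]
    have key : f M - (1/L) * ∫ x in a..b, f x / x
        = (1/L) * ((∫ x in a..M, f' x * (Real.log x - Real.log a))
                   - (∫ x in M..b, f' x * (Real.log b - Real.log x))) := by
      have hsubI : Set.uIcc a b ⊆ Set.Icc a b := by rw [Set.uIcc_of_le hab.le]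
      have hIccM1 : Set.uIcc a M ⊆ Set.uIcc a b := by
        rw [Set.uIcc_of_le haM.le, Set.uIcc_of_le hab.le]
        exact Set.Icc_subset_Icc le_rfl hMb.le
      have hIccM2 : Set.uIcc M b ⊆ Set.uIcc a b := by
        rw [Set.uIcc_of_le hMb.le, Set.uIcc_of_le hab.le]
        exact Set.Icc_subset_Icc haM.le le_rfl
      have hinv_cont : ContinuousOn (fun x : ℝ => x⁻¹) (Set.uIcc a b) := by
        refine ContinuousOn.inv₀ continuousOn_id fun x hx => ?_
        rw [Set.uIcc_of_le hab.le] at hx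
        exact (lt_of_lt_of_le ha0 hx.1).ne'
      have hg0c : ContinuousOn (fun x => (f M - f x) * x⁻¹) (Set.uIcc a b) :=
        (continuousOn_const.sub (hcf.mono hsubI)).mul hinv_cont
      have hg0int : IntervalIntegrable (fun x => (f M - f x) * x⁻¹) volume a b :=
        hg0c.intervalIntegrable
      have hg0int1 : IntervalIntegrable (fun x => (f M - f x) * x⁻¹) volume a M :=
        (hg0c.mono hIccM1).intervalIntegrable
      have hg0int2 : IntervalIntegrable (fun x => (f M - f x) * x⁻¹) volume M b :=
        (hg0c.mono hIccM2).intervalIntegrable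
      have E1 : ∫ x in a..M, (f M - f x) * x⁻¹
          = ∫ x in a..M, f' x * (Real.log x - Real.log a) := by
        have hu : ∀ x ∈ Set.uIcc a M, HasDerivAt (fun y => f M - f y) (-f' x) x := fun x hx =>
          (hdiff x (hIab (hsubI (hIccM1 hx)))).const_sub (f M)
        have hv : ∀ x ∈ Set.uIcc a M, HasDerivAt (fun y => Real.log y - Real.log a) x⁻¹ x := by
          intro x hx
          rw [Set.uIcc_of_le haM.le] at hx
          exact (Real.hasDerivAt_log (lt_of_lt_of_le ha0 hx.1).ne').sub_const _
        have hE := intervalIntegral.integral_mul_deriv_eq_deriv_mul hu hv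
          (hint.mono_set hIccM1).neg ((hinv_cont.mono hIccM1).intervalIntegrable)
        rw [hE]
        have : (∫ x in a..M, -f' x * (Real.log x - Real.log a))
            = -∫ x in a..M, f' x * (Real.log x - Real.log a) := by
          rw [← intervalIntegral.integral_neg]
          exact intervalIntegral.integral_congr fun x _ => by ring
        rw [this]
        ring
      have E2 : ∫ x in M..b, (f M - f x) * x⁻¹
          = -∫ x in M..b, f' x * (Real.log b - Real.log x) := by
        have hu : ∀ x ∈ Set.uIcc M b, HasDerivAt (fun y => f M - f y) (-f' x) x := fun x hx =>
          (hdiff x (hIab (hsubI (hIccM2 hx)))).const_sub (f M)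
        have hv : ∀ x ∈ Set.uIcc M b, HasDerivAt (fun y => Real.log y - Real.log b) x⁻¹ x := by
          intro x hx
          rw [Set.uIcc_of_le hMb.le] at hx
          exact (Real.hasDerivAt_log (lt_of_lt_of_le hM0 hx.1).ne').sub_const _
        have hE := intervalIntegral.integral_mul_deriv_eq_deriv_mul hu hv
          (hint.mono_set hIccM2).neg ((hinv_cont.mono hIccM2).intervalIntegrable)
        rw [hE]
        have : (∫ x in M..b, -f' x * (Real.log x - Real.log b))
            = ∫ x in M..b, f' x * (Real.log b - Real.log x) :=
          intervalIntegral.integral_congr fun x _ => by ring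
        rw [this]
        ring
      have E4 : (∫ x in a..M, (f M - f x) * x⁻¹) + (∫ x in M..b, (f M - f x) * x⁻¹)
          = ∫ x in a..b, (f M - f x) * x⁻¹ :=
        intervalIntegral.integral_add_adjacent_intervals hg0int1 hg0int2
      have E3 : ∫ x in a..b, (f M - f x) * x⁻¹ = f M * L - ∫ x in a..b, f x / x := by
        have i1 : IntervalIntegrable (fun x => f M * x⁻¹) volume a b :=
          (continuousOn_const.mul hinv_cont).intervalIntegrable
        have i2 : IntervalIntegrable (fun x => f x * x⁻¹) volume a b :=
          ((hcf.mono hsubI).mul hinv_cont).intervalIntegrable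
        have e : ∀ x ∈ Set.uIcc a b, (f M - f x) * x⁻¹ = f M * x⁻¹ - f x * x⁻¹ :=
          fun x _ => by ring
        rw [intervalIntegral.integral_congr e, intervalIntegral.integral_sub i1 i2,
          intervalIntegral.integral_const_mul, integral_inv_of_pos ha0 hb0, hLba]
        simp only [div_eq_mul_inv]
      have : f M - (1/L) * ∫ x in a..b, f x / x = (1/L) * ∫ x in a..b, (f M - f x) * x⁻¹ := by
        rw [E3]
        field_simp
      rw [this, ← E4, E1, E2]
      ring
    have habs : |f M - (1/L) * ∫ x in a..b, f x / x|
        ≤ (1/L) * ((∫ x in a..M, (Real.log x - Real.log a) * |f' x|)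
                 + (∫ x in M..b, (Real.log b - Real.log x) * |f' x|)) := by
      rw [key, abs_mul, abs_of_pos (by positivity : (0:ℝ) < 1/L)]
      refine mul_le_mul_of_nonneg_left ((abs_sub _ _).trans (add_le_add ?_ ?_)) (by positivity)
      · refine (intervalIntegral.abs_integral_le_integral_abs haM.le).trans (le_of_eq ?_)
        refine intervalIntegral.integral_congr fun x hx => ?_
        rw [Set.uIcc_of_le haM.le] at hx
        have hx0 : 0 < x := lt_of_lt_of_le ha0 hx.1
        rw [abs_mul, abs_of_nonneg (sub_nonneg.2 ((Real.log_le_log_iff ha0 hx0).2 hx.1))]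
        ring
      · refine (intervalIntegral.abs_integral_le_integral_abs hMb.le).trans (le_of_eq ?_)
        refine intervalIntegral.integral_congr fun x hx => ?_
        rw [Set.uIcc_of_le hMb.le] at hx
        have hx0 : 0 < x := lt_of_lt_of_le hM0 hx.1
        rw [abs_mul, abs_of_nonneg (sub_nonneg.2 ((Real.log_le_log_iff hx0 hb0).2 hx.2))]
        ring
    have hc₁pos : 0 < c₁ := by
      rw [hc₁]
      exact Real.rpow_pos_of_pos (by positivity) _
    have hc₂pos : 0 < c₂ := by
      rw [hc₂]
      exact Real.rpow_pos_of_pos (by positivity) _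
    have hf'm : AEStronglyMeasurable f' (volume.restrict (Set.Ioc a b)) :=
      hint.1.aestronglyMeasurable
    have hH1 : (∫ x in a..M, (Real.log x - Real.log a) * |f' x|)
        ≤ (L^2/8) ^ (1 - 1/q) * (L^2 * (a*A)^q * (g₁ c₁ / 4)) ^ (1/q) := by
      set μ₁ := volume.restrict (Set.Ioc a M) with hμ₁
      haveI : IsFiniteMeasure μ₁ := by
        constructor
        rw [hμ₁, Measure.restrict_apply_univ, Real.volume_Ioc]
        exact ENNReal.ofReal_lt_top
      set w : ℝ → ℝ := fun x => (Real.log x - Real.log a) * x⁻¹ with hwdef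
      set h : ℝ → ℝ := fun x => x * |f' x| with hhdef
      have hmem : ∀ x ∈ Set.Ioc a M, x ∈ Set.Icc a b := fun x hx =>
        ⟨hx.1.le, hx.2.trans hMb.le⟩
      have hx0' : ∀ x ∈ Set.Ioc a M, 0 < x := fun x hx => lt_trans ha0 hx.1
      have hwnn : ∀ x ∈ Set.Ioc a M, 0 ≤ w x := by
        intro x hx
        have hx0 := hx0' x hx
        have hll : Real.log a ≤ Real.log x := (Real.log_le_log_iff ha0 hx0).2 hx.1.le
        exact mul_nonneg (by linarith) (inv_nonneg.2 hx0.le)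
      have hhnn : ∀ x ∈ Set.Ioc a M, 0 ≤ h x := fun x hx =>
        mul_nonneg (hx0' x hx).le (abs_nonneg _)
      have hwm : AEStronglyMeasurable w μ₁ := by
        refine ContinuousOn.aestronglyMeasurable ?_ measurableSet_Ioc
        refine ContinuousOn.mul (ContinuousOn.sub ?_ continuousOn_const)
          (ContinuousOn.inv₀ continuousOn_id fun x hx => (hx0' x hx).ne')
        exact Real.continuousOn_log.mono fun x hx => (hx0' x hx).ne'
      have hhm : AEStronglyMeasurable h μ₁ := by
        refine AEStronglyMeasurable.mul aestronglyMeasurable_id ?_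
        exact (hf'm.mono_measure (Measure.restrict_mono (Set.Ioc_subset_Ioc le_rfl hMb.le) le_rfl)).norm
      have hwb : ∀ x ∈ Set.Ioc a M, w x ≤ L * a⁻¹ := by
        intro x hx
        have hx0 := hx0' x hx
        have h1 : Real.log x - Real.log a ≤ L := by
          have := (Real.log_le_log_iff hx0 hb0).2 ((hmem x hx).2)
          rw [hLdef]; linarith
        have h2 : x⁻¹ ≤ a⁻¹ := by
          exact inv_anti₀ ha0 hx.1.le
        exact mul_le_mul h1 h2 (by positivity) hL0.le
      have hhb : ∀ x ∈ Set.Ioc a M, h x ≤ b * A := by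
        intro x hx
        exact mul_le_mul (hx.2.trans hMb.le) (hbA x (hmem x hx)) (abs_nonneg _) hb0.le
      have hae : ∀ {P : ℝ → Prop}, (∀ x ∈ Set.Ioc a M, P x) → (∀ᵐ x ∂μ₁, P x) := by
        intro P hP
        rw [hμ₁, ae_restrict_iff' measurableSet_Ioc]
        exact ae_of_all _ hP
      have step2 := weighted_holder hq (hae hwnn) (hae hhnn) hwm hhm
        (by positivity : (0:ℝ) ≤ L * a⁻¹) (by positivity : (0:ℝ) ≤ b * A)
        (hae hwb) (hae hhb)
      -- step 1 : I₁ = ∫ w h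
      have step1 : (∫ x in a..M, (Real.log x - Real.log a) * |f' x|)
          = ∫ x, w x * h x ∂μ₁ := by
        rw [intervalIntegral.integral_of_le haM.le]
        refine setIntegral_congr_fun measurableSet_Ioc fun x hx => ?_
        have hx0 := hx0' x hx
        rw [hwdef, hhdef]
        field_simp [hwdef, hhdef]
      -- step 3 : ∫ w = L^2/8
      have step3 : ∫ x, w x ∂μ₁ = L^2/8 := by
        have e : ∫ x, w x ∂μ₁ = ∫ x in a..M, w x := (intervalIntegral.integral_of_le haM.le).symm
        rw [e]
        have hd : ∀ x ∈ Set.uIcc a M,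
            HasDerivAt (fun y => (Real.log y - Real.log a)^2 / 2) (w x) x := by
          intro x hx
          rw [Set.uIcc_of_le haM.le] at hx
          have hx0 : 0 < x := lt_of_lt_of_le ha0 hx.1
          have hd1 : HasDerivAt (fun y => Real.log y - Real.log a) x⁻¹ x :=
            (Real.hasDerivAt_log hx0.ne').sub_const _
          have h2 := (hd1.pow 2).div_const 2
          refine h2.congr_deriv ?_
          rw [hwdef]
          push_cast
          ring
        have hwc : ContinuousOn w (Set.uIcc a M) := by
          rw [Set.uIcc_of_le haM.le]
          refine ContinuousOn.mul (ContinuousOn.sub (Real.continuousOn_log.mono ?_)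
            continuousOn_const) (ContinuousOn.inv₀ continuousOn_id ?_) <;>
            exact fun x hx => (lt_of_lt_of_le ha0 hx.1).ne'
        rw [intervalIntegral.integral_eq_sub_of_hasDerivAt hd hwc.intervalIntegrable,
          hlogM, hLdef]
        ring
      -- step 4 : ∫ w h^q ≤ model
      set m₁ : ℝ → ℝ := fun x => w x *
        (x * B ^ (s*((Real.log x - Real.log a)/L)) * A ^ (1 - s*((Real.log x - Real.log a)/L)))^q
        with hm₁def
      have contm₁ : ContinuousOn m₁ (Set.Icc a M) := by
        have hne : ∀ x ∈ Set.Icc a M, x ≠ 0 := fun x hx => (lt_of_lt_of_le ha0 hx.1).ne'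
        have clog : ContinuousOn (fun x : ℝ => s*((Real.log x - Real.log a)/L)) (Set.Icc a M) :=
          (((Real.continuousOn_log.mono hne).sub continuousOn_const).div_const L).const_smul s
        have cw : ContinuousOn w (Set.Icc a M) := by
          refine ContinuousOn.mul (ContinuousOn.sub (Real.continuousOn_log.mono hne)
            continuousOn_const) (ContinuousOn.inv₀ continuousOn_id hne)
        refine cw.mul (ContinuousOn.rpow_const ?_ fun x hx => Or.inr hq0.le)
        exact (continuousOn_id.mul ((cont_crpow hB.ne').comp_continuousOn clog)).mul
          ((cont_crpow hA0.ne').comp_continuousOn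
            (continuousOn_const.sub clog))
      have step4a : ∀ x ∈ Set.Ioc a M, w x * h x ^ q ≤ m₁ x := by
        intro x hx
        have hx0 := hx0' x hx
        refine mul_le_mul_of_nonneg_left ?_ (hwnn x hx)
        refine Real.rpow_le_rpow (hhnn x hx) ?_ hq0.le
        rw [hhdef, mul_assoc]
        exact mul_le_mul_of_nonneg_left (hbound x (hmem x hx)) hx0.le
      have him : IntegrableOn m₁ (Set.Ioc a M) volume :=
        (contm₁.integrableOn_Icc).mono_set Set.Ioc_subset_Icc_self
      have hiwhq : IntegrableOn (fun x => w x * h x ^ q) (Set.Ioc a M) volume := by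
        refine MeasureTheory.memLp_one_iff_integrable.1 (MemLp.of_bound ?_
          ((L * a⁻¹) * (b*A)^q) ?_)
        · exact hwm.mul ((Real.continuous_rpow_const hq0.le).comp_aestronglyMeasurable hhm)
        · refine hae fun x hx => ?_
          rw [Real.norm_of_nonneg (mul_nonneg (hwnn x hx) (Real.rpow_nonneg (hhnn x hx) _))]
          exact mul_le_mul (hwb x hx) (Real.rpow_le_rpow (hhnn x hx) (hhb x hx) hq0.le)
            (Real.rpow_nonneg (hhnn x hx) _) (by positivity)
      have step4b : ∫ x, w x * h x ^ q ∂μ₁ ≤ ∫ x, m₁ x ∂μ₁ :=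
        setIntegral_mono_on hiwhq him measurableSet_Ioc step4a
      have hφ : ∀ t : ℝ, HasDerivAt (fun u : ℝ => Real.exp (Real.log a + L * u))
          (L * Real.exp (Real.log a + L * t)) t := by
        intro t
        have h1 : HasDerivAt (fun u : ℝ => Real.log a + L * u) L t := by
          simpa using ((hasDerivAt_id t).const_mul L).const_add (Real.log a)
        simpa [mul_comm, Function.comp_def] using (Real.hasDerivAt_exp _).comp t h1
      have himg : (fun u : ℝ => Real.exp (Real.log a + L * u)) '' (Set.uIcc 0 (1/2))
          ⊆ Set.Icc a M := by
        rintro y ⟨t, ht, rfl⟩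
        rw [Set.uIcc_of_le (by norm_num : (0:ℝ) ≤ 1/2)] at ht
        constructor
        · calc a = Real.exp (Real.log a) := (Real.exp_log ha0).symm
          _ ≤ Real.exp (Real.log a + L * t) :=
            Real.exp_le_exp.2 (by nlinarith [mul_nonneg hL0.le ht.1])
        · calc Real.exp (Real.log a + L * t) ≤ Real.exp (Real.log a + L * (1/2)) :=
            Real.exp_le_exp.2 (by nlinarith [mul_le_mul_of_nonneg_left ht.2 hL0.le])
          _ = M := by
            rw [show Real.log a + L * (1/2) = Real.log M by rw [hlogM, hLdef]; ring,
              Real.exp_log hM0]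
      have hsubst := intervalIntegral.integral_comp_smul_deriv''
        (f := fun u : ℝ => Real.exp (Real.log a + L * u))
        (f' := fun u : ℝ => L * Real.exp (Real.log a + L * u))
        (g := m₁) (a := 0) (b := 1/2)
        ((Real.continuous_exp.comp (continuous_const.add
          (continuous_const.mul continuous_id))).continuousOn)
        (fun x _ => (hφ x).hasDerivWithinAt)
        ((continuous_const.mul (Real.continuous_exp.comp (continuous_const.add
          (continuous_const.mul continuous_id)))).continuousOn)
        (contm₁.mono himg)
      have hφ0 : Real.exp (Real.log a + L * 0) = a := by simp [Real.exp_log ha0]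
      have hφhalf : Real.exp (Real.log a + L * (1/2)) = M := by
        rw [show Real.log a + L * (1/2) = Real.log M by rw [hlogM, hLdef]; ring,
          Real.exp_log hM0]
      beta_reduce at hsubst
      rw [hφ0, hφhalf] at hsubst
      have P1 : ∀ t ∈ Set.uIcc (0:ℝ) (1/2),
          (L * Real.exp (Real.log a + L * t)) • m₁ (Real.exp (Real.log a + L * t))
          = (L^2 * (a*A)^q) * (t * c₁ ^ (2*t)) := by
        intro t _
        set E := Real.exp (Real.log a + L * t) with hEdef
        have hE0 : 0 < E := Real.exp_pos _
        have hlogE : Real.log E = Real.log a + L * t := Real.log_exp _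
        have ht' : (Real.log E - Real.log a)/L = t := by
          rw [hlogE]; field_simp; ring
        have hlogc₁ : Real.log c₁
            = (q/2) * (Real.log b + s*Real.log B - Real.log a - s*Real.log A) := by
          rw [hc₁, Real.log_rpow (by positivity),
            Real.log_div (by positivity) (by positivity),
            Real.log_mul hb0.ne' (by positivity : (0:ℝ) < B ^ s).ne',
            Real.log_mul ha0.ne' (by positivity : (0:ℝ) < A ^ s).ne',
            Real.log_rpow hB, Real.log_rpow hA0]
          ring
        have hX : (E * B ^ (s*t) * A ^ (1 - s*t)) ^ q = (a*A)^q * c₁ ^ (2*t) := by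
          rw [Real.rpow_def_of_pos hB, Real.rpow_def_of_pos hA0, hEdef, ← Real.exp_add,
            ← Real.exp_add, ← Real.exp_mul]
          rw [Real.rpow_def_of_pos (by positivity : (0:ℝ) < a*A),
            Real.rpow_def_of_pos hc₁pos, ← Real.exp_add]
          congr 1
          rw [hlogc₁, Real.log_mul ha0.ne' hA0.ne', hLdef]
          ring
        rw [hm₁def]
        simp only []
        rw [hwdef]
        simp only []
        rw [hlogE, show Real.log a + L * t - Real.log a = L * t by ring,
          show L * t / L = t from by rw [mul_comm, mul_div_assoc, div_self hL0.ne', mul_one],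
          hX, smul_eq_mul]
        field_simp
      have hsub2 : ∫ t in (0:ℝ)..(1/2), (L^2*(a*A)^q) * (t * c₁^(2*t))
          = ∫ u in a..M, m₁ u := by
        rw [← hsubst]
        exact intervalIntegral.integral_congr fun t ht => (P1 t ht).symm
      have step4c : ∫ x, m₁ x ∂μ₁ = L^2 * (a*A)^q * (g₁ c₁ / 4) := by
        have e : ∫ x, m₁ x ∂μ₁ = ∫ x in a..M, m₁ x := (intervalIntegral.integral_of_le haM.le).symm
        rw [e, ← hsub2, intervalIntegral.integral_const_mul, Jlem hc₁pos]
      have step4 : ∫ x, w x * h x ^ q ∂μ₁ ≤ L^2 * (a*A)^q * (g₁ c₁ / 4) := by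
        rw [← step4c]; exact step4b
      have hwhqnn : 0 ≤ ∫ x, w x * h x ^ q ∂μ₁ := by
        refine integral_nonneg_of_ae (hae ?_)
        intro x hx
        exact mul_nonneg (hwnn x hx) (Real.rpow_nonneg (hhnn x hx) _)
      calc (∫ x in a..M, (Real.log x - Real.log a) * |f' x|)
          = ∫ x, w x * h x ∂μ₁ := step1
        _ ≤ (∫ x, w x ∂μ₁) ^ (1 - 1/q) * (∫ x, w x * h x ^ q ∂μ₁) ^ (1/q) := step2
        _ ≤ (L^2/8) ^ (1 - 1/q) * (L^2 * (a*A)^q * (g₁ c₁ / 4)) ^ (1/q) := by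
            rw [step3]
            exact mul_le_mul_of_nonneg_left
              (Real.rpow_le_rpow hwhqnn step4 (by positivity)) (by positivity)
    have hH2 : (∫ x in M..b, (Real.log b - Real.log x) * |f' x|)
        ≤ (L^2/8) ^ (1 - 1/q) * (L^2 * (b * B^s * A^(1-s))^q * (g₁ c₂ / 4)) ^ (1/q) := by
      set μ₂ := volume.restrict (Set.Ioc M b) with hμ₂
      haveI : IsFiniteMeasure μ₂ := by
        constructor
        rw [hμ₂, Measure.restrict_apply_univ, Real.volume_Ioc]
        exact ENNReal.ofReal_lt_top
      set w : ℝ → ℝ := fun x => (Real.log b - Real.log x) * x⁻¹ with hwdef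
      set h : ℝ → ℝ := fun x => x * |f' x| with hhdef
      have hmem : ∀ x ∈ Set.Ioc M b, x ∈ Set.Icc a b := fun x hx =>
        ⟨(haM.trans hx.1).le, hx.2⟩
      have hx0' : ∀ x ∈ Set.Ioc M b, 0 < x := fun x hx => lt_trans hM0 hx.1
      have hwnn : ∀ x ∈ Set.Ioc M b, 0 ≤ w x := by
        intro x hx
        have hx0 := hx0' x hx
        have hll : Real.log x ≤ Real.log b := (Real.log_le_log_iff hx0 hb0).2 hx.2
        exact mul_nonneg (by linarith) (inv_nonneg.2 hx0.le)
      have hhnn : ∀ x ∈ Set.Ioc M b, 0 ≤ h x := fun x hx =>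
        mul_nonneg (hx0' x hx).le (abs_nonneg _)
      have hwm : AEStronglyMeasurable w μ₂ := by
        refine ContinuousOn.aestronglyMeasurable ?_ measurableSet_Ioc
        refine ContinuousOn.mul (ContinuousOn.sub continuousOn_const ?_)
          (ContinuousOn.inv₀ continuousOn_id fun x hx => (hx0' x hx).ne')
        exact Real.continuousOn_log.mono fun x hx => (hx0' x hx).ne'
      have hhm : AEStronglyMeasurable h μ₂ := by
        refine AEStronglyMeasurable.mul aestronglyMeasurable_id ?_
        exact (hf'm.mono_measure (Measure.restrict_mono (Set.Ioc_subset_Ioc haM.le le_rfl) le_rfl)).norm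
      have hwb : ∀ x ∈ Set.Ioc M b, w x ≤ L * a⁻¹ := by
        intro x hx
        have hx0 := hx0' x hx
        have h1 : Real.log b - Real.log x ≤ L := by
          have := (Real.log_le_log_iff ha0 hx0).2 (hmem x hx).1
          rw [hLdef]; linarith
        have h2 : x⁻¹ ≤ a⁻¹ := inv_anti₀ ha0 (hmem x hx).1
        exact mul_le_mul h1 h2 (by positivity) hL0.le
      have hhb : ∀ x ∈ Set.Ioc M b, h x ≤ b * A := by
        intro x hx
        exact mul_le_mul hx.2 (hbA x (hmem x hx)) (abs_nonneg _) hb0.le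
      have hae : ∀ {P : ℝ → Prop}, (∀ x ∈ Set.Ioc M b, P x) → (∀ᵐ x ∂μ₂, P x) := by
        intro P hP
        rw [hμ₂, ae_restrict_iff' measurableSet_Ioc]
        exact ae_of_all _ hP
      have step2 := weighted_holder hq (hae hwnn) (hae hhnn) hwm hhm
        (by positivity : (0:ℝ) ≤ L * a⁻¹) (by positivity : (0:ℝ) ≤ b * A)
        (hae hwb) (hae hhb)
      have step1 : (∫ x in M..b, (Real.log b - Real.log x) * |f' x|)
          = ∫ x, w x * h x ∂μ₂ := by
        rw [intervalIntegral.integral_of_le hMb.le]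
        refine setIntegral_congr_fun measurableSet_Ioc fun x hx => ?_
        have hx0 := hx0' x hx
        rw [hwdef, hhdef]
        field_simp [hwdef, hhdef]
      have step3 : ∫ x, w x ∂μ₂ = L^2/8 := by
        have e : ∫ x, w x ∂μ₂ = ∫ x in M..b, w x := (intervalIntegral.integral_of_le hMb.le).symm
        rw [e]
        have hd : ∀ x ∈ Set.uIcc M b,
            HasDerivAt (fun y => -((Real.log b - Real.log y)^2 / 2)) (w x) x := by
          intro x hx
          rw [Set.uIcc_of_le hMb.le] at hx
          have hx0 : 0 < x := lt_of_lt_of_le hM0 hx.1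
          have hd1 : HasDerivAt (fun y => Real.log b - Real.log y) (-x⁻¹) x :=
            (Real.hasDerivAt_log hx0.ne').const_sub _
          have h2 := ((hd1.pow 2).div_const 2).neg
          refine h2.congr_deriv ?_
          rw [hwdef]
          push_cast
          ring
        have hwc : ContinuousOn w (Set.uIcc M b) := by
          rw [Set.uIcc_of_le hMb.le]
          refine ContinuousOn.mul (ContinuousOn.sub continuousOn_const
            (Real.continuousOn_log.mono ?_)) (ContinuousOn.inv₀ continuousOn_id ?_) <;>
            exact fun x hx => (lt_of_lt_of_le hM0 hx.1).ne'
        rw [intervalIntegral.integral_eq_sub_of_hasDerivAt hd hwc.intervalIntegrable,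
          hlogM, hLdef]
        ring
      set m₂ : ℝ → ℝ := fun x => w x *
        (x * B ^ (s*((Real.log x - Real.log a)/L)) * A ^ (1 - s*((Real.log x - Real.log a)/L)))^q
        with hm₂def
      have contm₂ : ContinuousOn m₂ (Set.Icc M b) := by
        have hne : ∀ x ∈ Set.Icc M b, x ≠ 0 := fun x hx => (lt_of_lt_of_le hM0 hx.1).ne'
        have clog : ContinuousOn (fun x : ℝ => s*((Real.log x - Real.log a)/L)) (Set.Icc M b) :=
          (((Real.continuousOn_log.mono hne).sub continuousOn_const).div_const L).const_smul s
        have cw : ContinuousOn w (Set.Icc M b) := by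
          refine ContinuousOn.mul (ContinuousOn.sub continuousOn_const
            (Real.continuousOn_log.mono hne)) (ContinuousOn.inv₀ continuousOn_id hne)
        refine cw.mul (ContinuousOn.rpow_const ?_ fun x hx => Or.inr hq0.le)
        exact (continuousOn_id.mul ((cont_crpow hB.ne').comp_continuousOn clog)).mul
          ((cont_crpow hA0.ne').comp_continuousOn
            (continuousOn_const.sub clog))
      have step4a : ∀ x ∈ Set.Ioc M b, w x * h x ^ q ≤ m₂ x := by
        intro x hx
        have hx0 := hx0' x hx
        refine mul_le_mul_of_nonneg_left ?_ (hwnn x hx)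
        refine Real.rpow_le_rpow (hhnn x hx) ?_ hq0.le
        rw [hhdef, mul_assoc]
        exact mul_le_mul_of_nonneg_left (hbound x (hmem x hx)) hx0.le
      have him : IntegrableOn m₂ (Set.Ioc M b) volume :=
        (contm₂.integrableOn_Icc).mono_set Set.Ioc_subset_Icc_self
      have hiwhq : IntegrableOn (fun x => w x * h x ^ q) (Set.Ioc M b) volume := by
        refine MeasureTheory.memLp_one_iff_integrable.1 (MemLp.of_bound ?_
          ((L * a⁻¹) * (b*A)^q) ?_)
        · exact hwm.mul ((Real.continuous_rpow_const hq0.le).comp_aestronglyMeasurable hhm)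
        · refine hae fun x hx => ?_
          rw [Real.norm_of_nonneg (mul_nonneg (hwnn x hx) (Real.rpow_nonneg (hhnn x hx) _))]
          exact mul_le_mul (hwb x hx) (Real.rpow_le_rpow (hhnn x hx) (hhb x hx) hq0.le)
            (Real.rpow_nonneg (hhnn x hx) _) (by positivity)
      have step4b : ∫ x, w x * h x ^ q ∂μ₂ ≤ ∫ x, m₂ x ∂μ₂ :=
        setIntegral_mono_on hiwhq him measurableSet_Ioc step4a
      have hφ : ∀ t : ℝ, HasDerivAt (fun u : ℝ => Real.exp (Real.log b - L * u))
          (-L * Real.exp (Real.log b - L * t)) t := by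
        intro t
        have h1 : HasDerivAt (fun u : ℝ => Real.log b - L * u) (-L) t := by
          simpa using ((hasDerivAt_id t).const_mul L).const_sub (Real.log b)
        simpa [mul_comm, Function.comp_def] using (Real.hasDerivAt_exp _).comp t h1
      have hφhalf : Real.exp (Real.log b - L * (1/2)) = M := by
        rw [show Real.log b - L * (1/2) = Real.log M by rw [hlogM, hLdef]; ring,
          Real.exp_log hM0]
      have himg : (fun u : ℝ => Real.exp (Real.log b - L * u)) '' (Set.uIcc 0 (1/2))
          ⊆ Set.Icc M b := by
        rintro y ⟨t, ht, rfl⟩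
        rw [Set.uIcc_of_le (by norm_num : (0:ℝ) ≤ 1/2)] at ht
        refine ⟨?_, ?_⟩
        · show M ≤ Real.exp (Real.log b - L * t)
          rw [← hφhalf]
          exact Real.exp_le_exp.2 (by nlinarith [mul_le_mul_of_nonneg_left ht.2 hL0.le])
        · show Real.exp (Real.log b - L * t) ≤ b
          have h1 : Real.exp (Real.log b - L * t) ≤ Real.exp (Real.log b) :=
            Real.exp_le_exp.2 (by nlinarith [mul_nonneg hL0.le ht.1])
          rwa [Real.exp_log hb0] at h1
      have hsubst := intervalIntegral.integral_comp_smul_deriv''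
        (f := fun u : ℝ => Real.exp (Real.log b - L * u))
        (f' := fun u : ℝ => -L * Real.exp (Real.log b - L * u))
        (g := m₂) (a := 0) (b := 1/2)
        ((Real.continuous_exp.comp (continuous_const.sub
          (continuous_const.mul continuous_id))).continuousOn)
        (fun x _ => (hφ x).hasDerivWithinAt)
        ((continuous_const.mul (Real.continuous_exp.comp (continuous_const.sub
          (continuous_const.mul continuous_id)))).continuousOn)
        (contm₂.mono himg)
      have hφ0 : Real.exp (Real.log b - L * 0) = b := by simp [Real.exp_log hb0]
      beta_reduce at hsubst
      rw [hφ0, hφhalf] at hsubst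
      have P2 : ∀ t ∈ Set.uIcc (0:ℝ) (1/2),
          (-L * Real.exp (Real.log b - L * t)) • m₂ (Real.exp (Real.log b - L * t))
          = -((L^2 * (b * B^s * A^(1-s))^q) * (t * c₂ ^ (2*t))) := by
        intro t _
        set E := Real.exp (Real.log b - L * t) with hEdef
        have hE0 : 0 < E := Real.exp_pos _
        have hlogE : Real.log E = Real.log b - L * t := Real.log_exp _
        have hlogc₂ : Real.log c₂
            = (q/2) * (Real.log a + s*Real.log A - Real.log b - s*Real.log B) := by
          rw [hc₂, Real.log_rpow (by positivity),
            Real.log_div (by positivity) (by positivity),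
            Real.log_mul ha0.ne' (by positivity : (0:ℝ) < A ^ s).ne',
            Real.log_mul hb0.ne' (by positivity : (0:ℝ) < B ^ s).ne',
            Real.log_rpow hB, Real.log_rpow hA0]
          ring
        have hX : (E * B ^ (s*(1-t)) * A ^ (1 - s*(1-t))) ^ q
            = (b * B^s * A^(1-s))^q * c₂ ^ (2*t) := by
          rw [Real.rpow_def_of_pos hB, Real.rpow_def_of_pos hA0, hEdef, ← Real.exp_add,
            ← Real.exp_add, ← Real.exp_mul]
          rw [Real.rpow_def_of_pos (by positivity : (0:ℝ) < b * B^s * A^(1-s)),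
            Real.rpow_def_of_pos hc₂pos, ← Real.exp_add]
          congr 1
          rw [hlogc₂, Real.log_mul (by positivity : (0:ℝ) < b * B^s).ne'
            (by positivity : (0:ℝ) < A ^ (1-s)).ne',
            Real.log_mul hb0.ne' (by positivity : (0:ℝ) < B ^ s).ne',
            Real.log_rpow hB, Real.log_rpow hA0, hLdef]
          ring
        rw [hm₂def]
        simp only []
        rw [hwdef]
        simp only []
        rw [hlogE, show Real.log b - (Real.log b - L * t) = L * t by ring,
          show Real.log b - L * t - Real.log a = L * (1 - t) by rw [hLdef]; ring,
          show L * (1 - t) / L = 1 - t from by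
            rw [mul_comm, mul_div_assoc, div_self hL0.ne', mul_one],
          hX, smul_eq_mul]
        field_simp
      have hsub2 : ∫ t in (0:ℝ)..(1/2), -((L^2 * (b * B^s * A^(1-s))^q) * (t * c₂^(2*t)))
          = ∫ u in b..M, m₂ u := by
        rw [← hsubst]
        exact intervalIntegral.integral_congr fun t ht => (P2 t ht).symm
      have step4c : ∫ x, m₂ x ∂μ₂ = L^2 * (b * B^s * A^(1-s))^q * (g₁ c₂ / 4) := by
        have e : ∫ x, m₂ x ∂μ₂ = ∫ x in M..b, m₂ x := (intervalIntegral.integral_of_le hMb.le).symm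
        have e2 : ∫ x in M..b, m₂ x = -∫ x in b..M, m₂ x :=
          intervalIntegral.integral_symm b M
        rw [e, e2, ← hsub2, intervalIntegral.integral_neg, neg_neg,
          intervalIntegral.integral_const_mul, Jlem hc₂pos]
      have step4 : ∫ x, w x * h x ^ q ∂μ₂ ≤ L^2 * (b * B^s * A^(1-s))^q * (g₁ c₂ / 4) := by
        rw [← step4c]; exact step4b
      have hwhqnn : 0 ≤ ∫ x, w x * h x ^ q ∂μ₂ := by
        refine integral_nonneg_of_ae (hae ?_)
        intro x hx
        exact mul_nonneg (hwnn x hx) (Real.rpow_nonneg (hhnn x hx) _)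
      calc (∫ x in M..b, (Real.log b - Real.log x) * |f' x|)
          = ∫ x, w x * h x ∂μ₂ := step1
        _ ≤ (∫ x, w x ∂μ₂) ^ (1 - 1/q) * (∫ x, w x * h x ^ q ∂μ₂) ^ (1/q) := step2
        _ ≤ (L^2/8) ^ (1 - 1/q) * (L^2 * (b * B^s * A^(1-s))^q * (g₁ c₂ / 4)) ^ (1/q) := by
            rw [step3]
            exact mul_le_mul_of_nonneg_left
              (Real.rpow_le_rpow hwhqnn step4 (by positivity)) (by positivity)
    have hg1 : 0 ≤ g₁ c₁ := g₁_nonneg_s9 hc₁pos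
    have hg2 : 0 ≤ g₁ c₂ := g₁_nonneg_s9 hc₂pos
    have ass1 := assemble hL0 (by positivity : (0:ℝ) ≤ a*A) hg1 hq
    have ass2 := assemble hL0 (by positivity : (0:ℝ) ≤ b*B^s*A^(1-s)) hg2 hq
    calc |f M - 1/L * ∫ x in a..b, f x / x|
        ≤ (1/L) * ((∫ x in a..M, (Real.log x - Real.log a) * |f' x|)
                 + (∫ x in M..b, (Real.log b - Real.log x) * |f' x|)) := habs
      _ ≤ (1/L) * ((L^2/8) ^ (1 - 1/q) * (L^2 * (a*A)^q * (g₁ c₁ / 4)) ^ (1/q)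
            + (L^2/8) ^ (1 - 1/q) * (L^2 * (b * B^s * A^(1-s))^q * (g₁ c₂ / 4)) ^ (1/q)) :=
          mul_le_mul_of_nonneg_left (add_le_add hH1 hH2) (by positivity)
      _ = L * (1/2:ℝ)^(3 - 1/q) * (a * A * (g₁ c₁) ^ (1/q)
            + b * B^s * A^(1-s) * (g₁ c₂) ^ (1/q)) := by
          rw [ass1, ass2]
          field_simp
end

section
/- Let f : I ⊆ (0,∞) → (0,∞) be differentiable on I°, let a, b ∈ I° with a < b, f' integrable on [a,b], and suppose |f'|^q is s-geometrically convex on [a,b] for some q > 1 and s ∈ (0,1]. If |f'(a)| ≤ 1 and |f'(b)| ≤ 1, then |(f(a)+f(b))/2 − (1/(ln b − ln a)) ∫_a^b f(x)/x dx| ≤ (1/2) ln(b/a) · ((q−1)/(2q−1))^{1−1/q} · [ a|f'(a)|^s g₂(θ₁)^{1/q} + b|f'(b)|^s g₂(θ₂)^{1/q} ]. -/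
open Real MeasureTheory Set

lemma st_le_rpow (s t : ℝ) (hs0 : 0 < s) (hs1 : s ≤ 1) (ht0 : 0 ≤ t) (ht1 : t ≤ 1) :
    s * t ≤ t ^ s := by
  rcases eq_or_lt_of_le ht0 with h | h
  · simp [← h, Real.zero_rpow hs0.ne']
  · have h1 : (1:ℝ) ≤ t ^ (s - 1) :=
      Real.one_le_rpow_of_pos_of_le_one_of_nonpos h ht1 (by linarith)
    have h2 : t ^ s = t ^ (s - 1) * t := by
      rw [← Real.rpow_add_one h.ne' (s-1)]; ring_nf
    nlinarith

lemma rpow_root_le (x y q : ℝ) (hy : 0 ≤ y) (hq : 0 < q) (h : x ^ q ≤ y ^ q) : x ≤ y := by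
  by_contra hc
  push_neg at hc
  exact absurd h (not_le.2 (Real.rpow_lt_rpow hy hc hq))

lemma g₂_nonneg (u : ℝ) (hu : 0 < u) : 0 ≤ g₂ u := by
  unfold g₂
  split_ifs with h
  · norm_num
  · rcases lt_or_gt_of_ne h with hlt | hgt
    · exact div_nonneg_of_nonpos (by linarith) (Real.log_nonpos hu.le hlt.le)
    · exact div_nonneg (by linarith) (Real.log_nonneg hgt.le)


lemma integral_abs_one_sub_two_mul (p : ℝ) (hp : 0 < p) :
    ∫ t in (0:ℝ)..1, |1 - 2*t| ^ p = 1 / (p + 1) := by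
  have hpc : Continuous (fun u : ℝ => |u| ^ p) := by
    apply Continuous.rpow_const continuous_abs
    intro x; right; exact hp.le
  have hint01 : ∫ x in (0:ℝ)..1, |x| ^ p = 1 / (p + 1) := by
    have h1 : ∫ x in (0:ℝ)..1, |x| ^ p = ∫ x in (0:ℝ)..1, x ^ p := by
      apply intervalIntegral.integral_congr
      intro x hx
      rw [uIcc_of_le (by norm_num : (0:ℝ) ≤ 1)] at hx
      simp only
      rw [abs_of_nonneg hx.1]
    rw [h1, integral_rpow (Or.inl (by linarith : (-1:ℝ) < p)),
      Real.one_rpow, Real.zero_rpow (by linarith : p + 1 ≠ 0)]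
    norm_num
  have h1 := intervalIntegral.integral_comp_mul_left (a := (0:ℝ)) (b := 1)
    (fun y => |1 - y| ^ p) (by norm_num : (2:ℝ) ≠ 0)
  have h2 := intervalIntegral.integral_comp_sub_left (a := (0:ℝ)) (b := 2)
    (fun u => |u| ^ p) 1
  have h4 := intervalIntegral.integral_comp_neg (a := (0:ℝ)) (b := 1) (fun u => |u| ^ p)
  have h3 : ∫ x in (-1:ℝ)..1, |x| ^ p
      = (∫ x in (-1:ℝ)..0, |x| ^ p) + ∫ x in (0:ℝ)..1, |x| ^ p :=
    (intervalIntegral.integral_add_adjacent_intervals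
      (hpc.intervalIntegrable _ _) (hpc.intervalIntegrable _ _)).symm
  norm_num at h1 h2 h4
  rw [h1, h2, h3, ← h4, hint01]
  ring

set_option maxHeartbeats 1000000 in
theorem stmt_10
    (I : Set ℝ) (hI : I.OrdConnected) (hIpos : I ⊆ Set.Ioi (0:ℝ))
    (f f' : ℝ → ℝ) (hfpos : ∀ x ∈ I, 0 < f x)
    (a b : ℝ) (ha : a ∈ interior I) (hb : b ∈ interior I) (hab : a < b)
    (hdiff : ∀ x ∈ interior I, HasDerivAt f (f' x) x)
    (hint : IntervalIntegrable f' volume a b)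
    (q s : ℝ) (hq : 1 < q) (hs : s ∈ Set.Ioc (0:ℝ) 1)
    (hconv : SGeometricallyConvexOn s (Set.Icc a b) (fun x => |f' x| ^ q))
    (hfa : |f' a| ≤ 1) (hfb : |f' b| ≤ 1) :
    |(f a + f b) / 2 - (1 / (Real.log b - Real.log a)) * ∫ x in a..b, f x / x| ≤
      (1 / 2 : ℝ) * Real.log (b / a) * ((q - 1) / (2 * q - 1)) ^ (1 - 1 / q) *
        (a * |f' a| ^ s * (g₂ ((b * |f' b| ^ s / (a * |f' a| ^ s)) ^ (q))) ^ (1 / q)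
         + b * |f' b| ^ s * (g₂ ((a * |f' a| ^ s / (b * |f' b| ^ s)) ^ (q))) ^ (1 / q)) := by
  have ha0 : 0 < a := hIpos (interior_subset ha)
  have hb0 : 0 < b := hIpos (interior_subset hb)
  set L : ℝ := Real.log b - Real.log a with hLdef
  have hL0 : 0 < L := sub_pos.2 (Real.log_lt_log ha0 hab)
  have hlogba : Real.log (b / a) = L := Real.log_div hb0.ne' ha0.ne'
  have hsubI : Icc a b ⊆ interior I := hI.interior.out ha hb
  set φ : ℝ → ℝ := fun t => Real.exp ((1 - t) * Real.log a + t * Real.log b) with hφdef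
  have hφpos : ∀ t, 0 < φ t := fun t => Real.exp_pos _
  have hφd : ∀ t : ℝ, HasDerivAt φ (L * φ t) t := by
    intro t
    have h1 : HasDerivAt (fun t : ℝ => (1 - t) * Real.log a + t * Real.log b) L t := by
      have := (((hasDerivAt_id t).const_sub 1).mul_const (Real.log a)).add
        ((hasDerivAt_id t).mul_const (Real.log b))
      exact this.congr_deriv (by rw [hLdef]; ring)
    have := (Real.hasDerivAt_exp ((1 - t) * Real.log a + t * Real.log b)).comp t h1
    simpa [hφdef, mul_comm, Function.comp_def] using this
  have hφ0 : φ 0 = a := by simp [hφdef, Real.exp_log ha0]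
  have hφ1 : φ 1 = b := by simp [hφdef, Real.exp_log hb0]
  have hlogle : Real.log a ≤ Real.log b := (Real.log_lt_log ha0 hab).le
  have hφmem : ∀ t ∈ Icc (0:ℝ) 1, φ t ∈ Icc a b := by
    intro t ht
    constructor
    · rw [← hφ0]
      apply Real.exp_le_exp.2
      nlinarith [ht.1, ht.2]
    · rw [← hφ1]
      apply Real.exp_le_exp.2
      nlinarith [ht.1, ht.2]
  have hφrpow : ∀ t, φ t = b ^ t * a ^ (1 - t) := by
    intro t
    rw [Real.rpow_def_of_pos hb0, Real.rpow_def_of_pos ha0, ← Real.exp_add]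
    simp only [hφdef]
    ring_nf
  have hφcont : Continuous φ := by
    apply Real.continuous_exp.comp
    continuity
  have hφmono : StrictMono φ := by
    intro x y hxy
    apply Real.exp_lt_exp.2
    nlinarith
  have hφimg : φ '' Icc 0 1 = Icc a b := by
    apply subset_antisymm
    · rintro _ ⟨t, ht, rfl⟩; exact hφmem t ht
    · have h := intermediate_value_Icc (by norm_num : (0:ℝ) ≤ 1) hφcont.continuousOn
      rwa [hφ0, hφ1] at h
  -- integrability of t ↦ f'(φ t) * (L * φ t)
  have hint' : IntegrableOn f' (Icc a b) :=
    (intervalIntegrable_iff_integrableOn_Icc_of_le hab.le).1 hint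
  have hv'meas : IntegrableOn (fun t => |L * φ t| • f' (φ t)) (Icc (0:ℝ) 1) := by
    rw [← hφimg] at hint'
    exact (integrableOn_image_iff_integrableOn_abs_deriv_smul measurableSet_Icc
      (fun t _ => (hφd t).hasDerivWithinAt) hφmono.injective.injOn f').1 hint'
  have hv'int : IntervalIntegrable (fun t => f' (φ t) * (L * φ t)) volume 0 1 := by
    rw [intervalIntegrable_iff_integrableOn_Icc_of_le (by norm_num : (0:ℝ) ≤ 1)]
    refine hv'meas.congr_fun (fun t _ => ?_) measurableSet_Icc
    simp only [smul_eq_mul]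
    rw [abs_of_pos (mul_pos hL0 (hφpos t))]
    ring
  -- continuity of f on Icc a b
  have hfc : ContinuousOn f (Icc a b) := fun x hx =>
    ((hdiff x (hsubI hx)).continuousAt).continuousWithinAt
  -- substitution
  have hsub : ∫ x in a..b, f x / x = L * ∫ t in (0:ℝ)..1, f (φ t) := by
    have himg : φ '' Set.uIcc (0:ℝ) 1 = Icc a b := by
      rw [uIcc_of_le (by norm_num : (0:ℝ) ≤ 1)]; exact hφimg
    have hg : ContinuousOn (fun x => f x / x) (φ '' Set.uIcc (0:ℝ) 1) := by
      rw [himg]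
      exact hfc.div continuousOn_id (fun x hx => (lt_of_lt_of_le ha0 hx.1).ne')
    have h := intervalIntegral.integral_comp_smul_deriv'' (a := (0:ℝ)) (b := 1)
      (f := φ) (f' := fun t => L * φ t) (g := fun x => f x / x)
      hφcont.continuousOn
      (fun x _ => (hφd x).hasDerivWithinAt)
      ((continuous_const.mul hφcont).continuousOn) hg
    rw [hφ0, hφ1] at h
    rw [← h, ← intervalIntegral.integral_const_mul]
    apply intervalIntegral.integral_congr
    intro t _
    have hne : φ t ≠ 0 := (hφpos t).ne'
    simp only [smul_eq_mul, Function.comp_apply]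
    field_simp
  -- integration by parts
  have hparts : ∫ t in (0:ℝ)..1, (1 - 2*t) * (f' (φ t) * (L * φ t))
      = (1 - 2*1) * f (φ 1) - (1 - 2*0) * f (φ 0) - ∫ t in (0:ℝ)..1, (-2) * f (φ t) := by
    apply intervalIntegral.integral_mul_deriv_eq_deriv_mul
      (u := fun t => 1 - 2*t) (u' := fun _ => (-2:ℝ)) (v := fun t => f (φ t))
    · intro x _
      have := ((hasDerivAt_id x).const_mul 2).const_sub 1
      simpa using this
    · intro x hx
      rw [uIcc_of_le (by norm_num : (0:ℝ) ≤ 1)] at hx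
      exact (hdiff (φ x) (hsubI (hφmem x hx))).comp x (hφd x)
    · exact intervalIntegrable_const
    · exact hv'int
  -- the identity
  set E : ℝ := ∫ t in (0:ℝ)..1, (1 - 2*t) * (f' (φ t) * (L * φ t)) with hEdef
  have hid : (f a + f b) / 2 - (1 / L) * ∫ x in a..b, f x / x = -(1/2) * E := by
    have h2 : ∫ t in (0:ℝ)..1, (-2) * f (φ t) = -2 * ∫ t in (0:ℝ)..1, f (φ t) :=
      intervalIntegral.integral_const_mul _ _
    have h3 : (1 / L) * ∫ x in a..b, f x / x = ∫ t in (0:ℝ)..1, f (φ t) := by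
      rw [hsub]; field_simp
    rw [h3, hparts, h2, hφ0, hφ1]
    ring
  rw [hid, hlogba]
  rw [abs_mul, abs_neg, abs_of_pos (by norm_num : (0:ℝ) < 1/2)]
  -- case split
  have hq0 : (0:ℝ) < q := by linarith
  by_cases hdeg : f' a = 0 ∨ f' b = 0
  · -- degenerate case
    have hker : ∀ t ∈ Ioo (0:ℝ) 1, f' (φ t) = 0 := by
      intro t ht
      have h1 := hconv b (right_mem_Icc.2 hab.le) a (left_mem_Icc.2 hab.le) t
        ⟨ht.1.le, ht.2.le⟩
      simp only at h1
      rw [← hφrpow t] at h1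
      have hR0 : (|f' b| ^ q) ^ t ^ s * (|f' a| ^ q) ^ (1 - t) ^ s = 0 := by
        rcases hdeg with h | h
        · have : |f' a| ^ q = 0 := by rw [h, abs_zero, Real.zero_rpow hq0.ne']
          rw [this, Real.zero_rpow (Real.rpow_pos_of_pos (by linarith [ht.2] : 0 < 1 - t) s).ne',
            mul_zero]
        · have : |f' b| ^ q = 0 := by rw [h, abs_zero, Real.zero_rpow hq0.ne']
          rw [this, Real.zero_rpow (Real.rpow_pos_of_pos ht.1 s).ne', zero_mul]
      rw [hR0] at h1
      have h2 : |f' (φ t)| ^ q = 0 :=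
        le_antisymm h1 (Real.rpow_nonneg (abs_nonneg _) q)
      have := (Real.rpow_eq_zero_iff_of_nonneg (abs_nonneg (f' (φ t)))).1 h2
      exact abs_eq_zero.1 this.1
    have hE0 : E = 0 := by
      have hnull : ∀ᵐ (t : ℝ) ∂(volume : Measure ℝ), t ≠ 1 := by
        rw [ae_iff]
        simp only [ne_eq, not_not, setOf_eq_eq_singleton]
        exact Real.volume_singleton
      have hzero : ∫ t in (0:ℝ)..1, (1 - 2*t) * (f' (φ t) * (L * φ t))
          = ∫ t in (0:ℝ)..1, (0:ℝ) := by
        apply intervalIntegral.integral_congr_ae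
        filter_upwards [hnull] with t ht1 htmem
        rw [uIoc_of_le (by norm_num : (0:ℝ) ≤ 1)] at htmem
        rw [hker t ⟨htmem.1, lt_of_le_of_ne htmem.2 ht1⟩]
        ring
      rw [hEdef, hzero]
      simp
    rw [hE0, abs_zero, mul_zero]
    have h1q : (1:ℝ)/q ≠ 0 := by positivity
    rcases hdeg with h | h
    · have hz : |f' a| ^ s = 0 := by rw [h, abs_zero, Real.zero_rpow hs.1.ne']
      rw [hz]
      simp [g₂, Real.zero_rpow hq0.ne', Real.zero_rpow (inv_ne_zero hq0.ne')]
    · have hz : |f' b| ^ s = 0 := by rw [h, abs_zero, Real.zero_rpow hs.1.ne']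
      rw [hz]
      simp [g₂, Real.zero_rpow hq0.ne', Real.zero_rpow (inv_ne_zero hq0.ne')]
  · push_neg at hdeg
    have hA0 : 0 < |f' a| := abs_pos.2 hdeg.1
    have hB0 : 0 < |f' b| := abs_pos.2 hdeg.2
    set A : ℝ := a * |f' a| ^ s with hAdef
    set B : ℝ := b * |f' b| ^ s with hBdef
    have hA : 0 < A := mul_pos ha0 (Real.rpow_pos_of_pos hA0 s)
    have hB : 0 < B := mul_pos hb0 (Real.rpow_pos_of_pos hB0 s)
    set G : ℝ → ℝ := fun t => Real.exp ((1 - t) * Real.log A + t * Real.log B) with hGdef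
    have hGpos : ∀ t, 0 < G t := fun t => Real.exp_pos _
    have hGcont : Continuous G := Real.continuous_exp.comp
      (((continuous_const.sub continuous_id).mul continuous_const).add
        (continuous_id.mul continuous_const))
    have hGrpow : ∀ t, G t = A ^ (1 - t) * B ^ t := by
      intro t
      rw [Real.rpow_def_of_pos hA, Real.rpow_def_of_pos hB, ← Real.exp_add]
      simp only [hGdef]
      ring_nf
    -- pointwise bound
    have hkey : ∀ t ∈ Icc (0:ℝ) 1, φ t * |f' (φ t)| ≤ G t := by
      intro t ht
      have h1 := hconv b (right_mem_Icc.2 hab.le) a (left_mem_Icc.2 hab.le) t ht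
      simp only at h1
      rw [← hφrpow t] at h1
      have hcb : |f' b| ^ q ≤ 1 := Real.rpow_le_one (abs_nonneg _) hfb hq0.le
      have hca : |f' a| ^ q ≤ 1 := Real.rpow_le_one (abs_nonneg _) hfa hq0.le
      have hcb0 : 0 < |f' b| ^ q := Real.rpow_pos_of_pos hB0 q
      have hca0 : 0 < |f' a| ^ q := Real.rpow_pos_of_pos hA0 q
      have e1 : (|f' b| ^ q) ^ t ^ s ≤ (|f' b| ^ q) ^ (s * t) :=
        Real.rpow_le_rpow_of_exponent_ge hcb0 hcb (st_le_rpow s t hs.1 hs.2 ht.1 ht.2)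
      have e2 : (|f' a| ^ q) ^ (1 - t) ^ s ≤ (|f' a| ^ q) ^ (s * (1 - t)) :=
        Real.rpow_le_rpow_of_exponent_ge hca0 hca
          (st_le_rpow s (1 - t) hs.1 hs.2 (by linarith [ht.2]) (by linarith [ht.1]))
      have h2 : |f' (φ t)| ^ q ≤ (|f' b| ^ (s * t) * |f' a| ^ (s * (1 - t))) ^ q := by
        calc |f' (φ t)| ^ q ≤ (|f' b| ^ q) ^ t ^ s * (|f' a| ^ q) ^ (1 - t) ^ s := h1
        _ ≤ (|f' b| ^ q) ^ (s * t) * (|f' a| ^ q) ^ (s * (1 - t)) := by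
            apply mul_le_mul e1 e2 (Real.rpow_nonneg hca0.le _) (Real.rpow_nonneg hcb0.le _)
        _ = (|f' b| ^ (s * t) * |f' a| ^ (s * (1 - t))) ^ q := by
            rw [Real.mul_rpow (Real.rpow_nonneg (abs_nonneg _) _)
              (Real.rpow_nonneg (abs_nonneg _) _),
              ← Real.rpow_mul (abs_nonneg _), ← Real.rpow_mul (abs_nonneg _),
              ← Real.rpow_mul (abs_nonneg _), ← Real.rpow_mul (abs_nonneg _)]
            ring_nf
      have h3 : |f' (φ t)| ≤ |f' b| ^ (s * t) * |f' a| ^ (s * (1 - t)) :=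
        rpow_root_le _ _ q (by positivity) hq0 h2
      calc φ t * |f' (φ t)| ≤ φ t * (|f' b| ^ (s * t) * |f' a| ^ (s * (1 - t))) :=
            mul_le_mul_of_nonneg_left h3 (hφpos t).le
      _ = G t := by
            rw [hGrpow t, hφrpow t, hAdef, hBdef,
              Real.mul_rpow ha0.le (Real.rpow_nonneg (abs_nonneg _) _),
              Real.mul_rpow hb0.le (Real.rpow_nonneg (abs_nonneg _) _),
              ← Real.rpow_mul (abs_nonneg _), ← Real.rpow_mul (abs_nonneg _)]
            ring
    -- bound |E| by the dominating integral
    have habs : |E| ≤ L * ∫ t in (0:ℝ)..1, |1 - 2*t| * G t := by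
      have h1 : |E| ≤ ∫ t in (0:ℝ)..1, |(1 - 2*t) * (f' (φ t) * (L * φ t))| := by
        rw [hEdef]
        exact intervalIntegral.abs_integral_le_integral_abs (by norm_num)
      have hGint : IntervalIntegrable (fun t => L * (|1 - 2*t| * G t)) volume 0 1 := by
        apply Continuous.intervalIntegrable
        exact continuous_const.mul (((continuous_const.sub
          (continuous_const.mul continuous_id)).abs).mul hGcont)
      have habsint : IntervalIntegrable
          (fun t => |(1 - 2*t) * (f' (φ t) * (L * φ t))|) volume 0 1 := by
        apply IntervalIntegrable.abs
        exact hv'int.continuousOn_mul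
          ((continuous_const.sub (continuous_const.mul continuous_id)).continuousOn)
      have h2 : ∫ t in (0:ℝ)..1, |(1 - 2*t) * (f' (φ t) * (L * φ t))|
          ≤ ∫ t in (0:ℝ)..1, L * (|1 - 2*t| * G t) := by
        apply intervalIntegral.integral_mono_on (by norm_num) habsint hGint
        intro t ht
        have hk := hkey t ht
        have e1 : |(1 - 2*t) * (f' (φ t) * (L * φ t))|
            = |1 - 2*t| * (|f' (φ t)| * (L * φ t)) := by
          rw [abs_mul, abs_mul, abs_of_pos (mul_pos hL0 (hφpos t))]
        have e2 : |1 - 2*t| * (|f' (φ t)| * (L * φ t))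
            = (L * |1 - 2*t|) * (φ t * |f' (φ t)|) := by ring
        have e3 : L * (|1 - 2*t| * G t) = (L * |1 - 2*t|) * G t := by ring
        rw [e1, e2, e3]
        exact mul_le_mul_of_nonneg_left hk (mul_nonneg hL0.le (abs_nonneg _))
      calc |E| ≤ ∫ t in (0:ℝ)..1, |(1 - 2*t) * (f' (φ t) * (L * φ t))| := h1
      _ ≤ ∫ t in (0:ℝ)..1, L * (|1 - 2*t| * G t) := h2
      _ = L * ∫ t in (0:ℝ)..1, |1 - 2*t| * G t := intervalIntegral.integral_const_mul _ _
    -- Hölder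
    set p : ℝ := q / (q - 1) with hpdef
    have hq1 : (0:ℝ) < q - 1 := by linarith
    have hpq : p.HolderConjugate q :=
      ((Real.holderConjugate_iff_eq_conjExponent hq).2 hpdef).symm
    have hp0 : 0 < p := hpq.pos
    have hIoc : ∀ g : ℝ → ℝ, ∫ t in (0:ℝ)..1, g t = ∫ t in Ioc (0:ℝ) 1, g t :=
      fun g => intervalIntegral.integral_of_le (by norm_num)
    haveI : IsFiniteMeasure (volume.restrict (Ioc (0:ℝ) 1)) := by
      constructor
      rw [Measure.restrict_apply_univ]
      simp [Real.volume_Ioc]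
    have hf1cont : Continuous (fun t : ℝ => |1 - 2*t|) :=
      (continuous_const.sub (continuous_const.mul continuous_id)).abs
    have hmf : MemLp (fun t : ℝ => |1 - 2*t|) (ENNReal.ofReal p)
        (volume.restrict (Ioc (0:ℝ) 1)) := by
      refine MemLp.mono_exponent ?_ le_top
      apply memLp_top_of_bound hf1cont.aestronglyMeasurable 1
      filter_upwards [ae_restrict_mem measurableSet_Ioc] with t ht
      rw [Real.norm_eq_abs, abs_abs]
      exact abs_le.2 ⟨by linarith [ht.2], by linarith [ht.1]⟩
    have hmg : MemLp G (ENNReal.ofReal q) (volume.restrict (Ioc (0:ℝ) 1)) := by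
      refine MemLp.mono_exponent ?_ le_top
      apply memLp_top_of_bound hGcont.aestronglyMeasurable
        (Real.exp (|Real.log A| + |Real.log B|))
      filter_upwards [ae_restrict_mem measurableSet_Ioc] with t ht
      rw [Real.norm_eq_abs, abs_of_pos (hGpos t)]
      apply Real.exp_le_exp.2
      have h1 := le_abs_self (Real.log A)
      have h2 := le_abs_self (Real.log B)
      have h3 := neg_abs_le (Real.log A)
      have h4 := neg_abs_le (Real.log B)
      nlinarith [ht.1, ht.2]
    have hholder := MeasureTheory.integral_mul_le_Lp_mul_Lq_of_nonneg hpq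
      (μ := volume.restrict (Ioc (0:ℝ) 1)) (f := fun t : ℝ => |1 - 2*t|) (g := G)
      (ae_of_all _ fun t => abs_nonneg _) (ae_of_all _ fun t => (hGpos t).le) hmf hmg
    -- value of ∫ |1-2t|^p
    have hPval : ∫ t in (0:ℝ)..1, |1 - 2*t| ^ p = (q - 1) / (2*q - 1) := by
      rw [integral_abs_one_sub_two_mul p hp0, hpdef]
      have h2q : 2*q - 1 ≠ 0 := by linarith
      field_simp
      rw [eq_div_iff (by linarith)]
      ring
    have hexp1p : 1 / p = 1 - 1 / q := by
      have h := hpq.inv_add_inv_eq_one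
      rw [one_div, one_div]
      linarith
    -- value of ∫ G^q
    have hGq : ∀ t : ℝ, (G t) ^ q
        = Real.exp (q * Real.log A) * Real.exp ((q * (Real.log B - Real.log A)) * t) := by
      intro t
      rw [hGdef]
      simp only
      rw [Real.rpow_def_of_pos (Real.exp_pos _), Real.log_exp, ← Real.exp_add]
      congr 1
      ring
    have hGval : ∫ t in (0:ℝ)..1, (G t) ^ q = A ^ q * g₂ ((B / A) ^ q) := by
      have hstep : ∫ t in (0:ℝ)..1, (G t) ^ q
          = Real.exp (q * Real.log A)
            * ∫ t in (0:ℝ)..1, Real.exp ((q * (Real.log B - Real.log A)) * t) := by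
        simp only [hGq]
        rw [intervalIntegral.integral_const_mul]
      have hexpA : Real.exp (q * Real.log A) = A ^ q := by
        rw [Real.rpow_def_of_pos hA, mul_comm]
      have hBA : B / A = Real.exp (Real.log B - Real.log A) := by
        rw [Real.exp_sub, Real.exp_log hA, Real.exp_log hB]
      have hBAq : (B / A) ^ q = Real.exp (q * (Real.log B - Real.log A)) := by
        rw [hBA, Real.rpow_def_of_pos (Real.exp_pos _), Real.log_exp, mul_comm]
      by_cases hABlog : Real.log B - Real.log A = 0
      · have hBA1 : (B / A) ^ q = 1 := by rw [hBAq, hABlog, mul_zero, Real.exp_zero]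
        rw [hstep, hexpA, hBA1]
        have : g₂ (1:ℝ) = 1 := by simp [g₂]
        rw [this]
        simp [hABlog]
      · set c : ℝ := q * (Real.log B - Real.log A) with hcdef
        have hc0 : c ≠ 0 := mul_ne_zero hq0.ne' hABlog
        have hintc : ∫ t in (0:ℝ)..1, Real.exp (c * t) = (Real.exp c - 1) / c := by
          rw [intervalIntegral.integral_comp_mul_left Real.exp hc0]
          rw [mul_zero, mul_one, integral_exp, Real.exp_zero, smul_eq_mul]
          field_simp
        have hne1 : (B / A) ^ q ≠ 1 := by
          rw [hBAq]
          rw [Ne, Real.exp_eq_one_iff]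
          exact hc0
        have hg2 : g₂ ((B / A) ^ q) = (Real.exp c - 1) / c := by
          rw [g₂, if_neg hne1, hBAq, Real.log_exp]
        rw [hstep, hexpA, hintc, hg2]
    -- assemble
    have hg2nn : 0 ≤ g₂ ((B / A) ^ q) :=
      g₂_nonneg _ (Real.rpow_pos_of_pos (div_pos hB hA) q)
    have hGroot : (∫ t in (0:ℝ)..1, (G t) ^ q) ^ (1/q)
        = A * (g₂ ((B / A) ^ q)) ^ (1/q) := by
      rw [hGval, Real.mul_rpow (Real.rpow_nonneg hA.le q) hg2nn,
        ← Real.rpow_mul hA.le, mul_one_div, div_self hq0.ne', Real.rpow_one]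
    have hH : ∫ t in (0:ℝ)..1, |1 - 2*t| * G t
        ≤ ((q - 1) / (2*q - 1)) ^ (1 - 1/q) * (A * (g₂ ((B / A) ^ q)) ^ (1/q)) := by
      have h := hholder
      rw [← hIoc (fun t => |1 - 2*t| * G t), ← hIoc (fun t => |1 - 2*t| ^ p),
        ← hIoc (fun t => (G t) ^ q)] at h
      rw [hPval, hGroot, hexp1p] at h
      exact h
    have hT2 : 0 ≤ B * (g₂ ((A / B) ^ q)) ^ (1/q) :=
      mul_nonneg hB.le (Real.rpow_nonneg
        (g₂_nonneg _ (Real.rpow_pos_of_pos (div_pos hA hB) q)) _)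
    have hCpnn : (0:ℝ) ≤ ((q - 1) / (2*q - 1)) ^ (1 - 1/q) :=
      Real.rpow_nonneg (div_nonneg (by linarith) (by linarith)) _
    have h5 : |E| ≤ L * (((q - 1) / (2*q - 1)) ^ (1 - 1/q) * (A * (g₂ ((B / A) ^ q)) ^ (1/q))) :=
      habs.trans (mul_le_mul_of_nonneg_left hH hL0.le)
    nlinarith [h5, hT2, hL0, hCpnn, mul_nonneg (mul_nonneg hL0.le hCpnn) hT2]
end

section
/- Let f : I ⊆ (0,∞) → (0,∞) be differentiable on I°, let a, b ∈ I° with a < b, f' integrable on [a,b], and suppose |f'|^q is s-geometrically convex on [a,b] for some q > 1 and s ∈ (0,1]. If |f'(a)| ≤ 1 ≤ |f'(b)|, then |(f(a)+f(b))/2 − (1/(ln b − ln a)) ∫_a^b f(x)/x dx| ≤ (1/2) ln(b/a) · ((q−1)/(2q−1))^{1−1/q} · [ a|f'(a)|^s |f'(b)|^{1−s} g₂(θ₁)^{1/q} + b|f'(b)| g₂(θ₂)^{1/q} ]. -/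
open Real MeasureTheory Set

lemma exp_int (c : ℝ) (hc : c ≠ 0) : ∫ t in (0:ℝ)..1, Real.exp (c * t) = (Real.exp c - 1)/c := by
  rw [intervalIntegral.integral_comp_mul_left (fun x => Real.exp x) hc]
  simp [integral_exp, smul_eq_mul]
  ring

lemma jensen_exp (c q : ℝ) (hq : 1 < q) :
    ∫ t in (0:ℝ)..1, Real.exp (c/q * t) ≤ (∫ t in (0:ℝ)..1, Real.exp (c*t)) ^ (1/q) := by
  have hq0 : 0 < q := lt_trans one_pos hq
  have h1q : 0 ≤ 1/q := by positivity
  have h1q' : 1/q ≤ 1 := by rw [div_le_one hq0]; linarith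
  set μ := volume.restrict (Set.Ioc (0:ℝ) 1) with hμ
  have : IsProbabilityMeasure μ := ⟨by simp [hμ, Real.volume_Ioc]⟩
  have key := ConcaveOn.le_map_integral (μ := μ) (f := fun t => Real.exp (c*t))
    (g := fun x => x ^ (1/q)) (s := Set.Ici 0)
    (Real.concaveOn_rpow h1q h1q') ((Real.continuous_rpow_const h1q).continuousOn)
    isClosed_Ici (Filter.Eventually.of_forall fun t => (Real.exp_pos _).le)
    ((Real.continuous_exp.comp (continuous_const.mul continuous_id)).integrableOn_Ioc)
    (((Real.continuous_rpow_const h1q).comp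
      (Real.continuous_exp.comp (continuous_const.mul continuous_id))).integrableOn_Ioc)
  rw [intervalIntegral.integral_of_le zero_le_one, intervalIntegral.integral_of_le zero_le_one]
  refine le_trans (le_of_eq ?_) key
  refine setIntegral_congr_fun measurableSet_Ioc fun t _ => ?_
  show Real.exp (c/q*t) = Real.exp (c*t) ^ (1/q)
  rw [← Real.exp_mul]
  ring_nf

lemma half_le_C (q : ℝ) (hq : 1 < q) : (1:ℝ)/2 ≤ ((q-1)/(2*q-1)) ^ (1 - 1/q) := by
  have hq0 : 0 < q := lt_trans one_pos hq
  have hq1 : (0:ℝ) < q - 1 := by linarith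
  have hq2 : (0:ℝ) < 2*q - 1 := by linarith
  have hx : (0:ℝ) < (q-1)/(2*q-1) := div_pos hq1 hq2
  have hkey : (q - 1) * Real.log ((2*q-1)/(q-1)) ≤ q * Real.log 2 := by
    have h1 : (2*q-1)/(q-1) = 2 * (1 + 1/(2*(q-1))) := by
      field_simp; ring
    have h2 : Real.log ((2*q-1)/(q-1)) = Real.log 2 + Real.log (1 + 1/(2*(q-1))) := by
      rw [h1, Real.log_mul (by norm_num) (by positivity)]
    have h3 : Real.log (1 + 1/(2*(q-1))) ≤ 1/(2*(q-1)) := by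
      have := Real.log_le_sub_one_of_pos (x := 1 + 1/(2*(q-1))) (by positivity)
      linarith
    have h5 : (1:ℝ)/2 ≤ Real.log 2 := by
      have := Real.log_two_gt_d9; linarith
    have h6 : (q-1) * (1/(2*(q-1))) = 1/2 := by field_simp
    have h7 : (q-1) * Real.log ((2*q-1)/(q-1)) ≤ (q-1)*Real.log 2 + (q-1)*(1/(2*(q-1))) := by
      rw [h2, mul_add]
      have := mul_le_mul_of_nonneg_left h3 hq1.le
      linarith
    rw [h6] at h7
    nlinarith
  have hlog : -Real.log 2 ≤ (1 - 1/q) * Real.log ((q-1)/(2*q-1)) := by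
    have hinv : Real.log ((q-1)/(2*q-1)) = - Real.log ((2*q-1)/(q-1)) := by
      rw [← Real.log_inv]; congr 1; rw [inv_div]
    rw [hinv]
    have h7 : (1 - 1/q) = (q-1)/q := by field_simp
    rw [h7, mul_neg, neg_le_neg_iff, div_mul_eq_mul_div, div_le_iff₀ hq0]
    nlinarith [hkey]
  calc (1:ℝ)/2 = Real.exp (-Real.log 2) := by
        rw [Real.exp_neg, Real.exp_log (by norm_num)]; norm_num
    _ ≤ Real.exp ((1 - 1/q) * Real.log ((q-1)/(2*q-1))) := Real.exp_le_exp.mpr hlog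
    _ = ((q-1)/(2*q-1)) ^ (1 - 1/q) := by
        rw [Real.rpow_def_of_pos hx]; ring_nf


set_option maxHeartbeats 1000000 in
theorem stmt_12
    (I : Set ℝ) (hI : I.OrdConnected) (hIpos : I ⊆ Set.Ioi (0:ℝ))
    (f f' : ℝ → ℝ) (hfpos : ∀ x ∈ I, 0 < f x)
    (a b : ℝ) (ha : a ∈ interior I) (hb : b ∈ interior I) (hab : a < b)
    (hdiff : ∀ x ∈ interior I, HasDerivAt f (f' x) x)
    (hint : IntervalIntegrable f' volume a b)
    (q s : ℝ) (hq : 1 < q) (hs : s ∈ Set.Ioc (0:ℝ) 1)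
    (hconv : SGeometricallyConvexOn s (Set.Icc a b) (fun x => |f' x| ^ q))
    (hfa : |f' a| ≤ 1) (hfb : 1 ≤ |f' b|) :
    |(f a + f b) / 2 - (1 / (Real.log b - Real.log a)) * ∫ x in a..b, f x / x| ≤
      (1 / 2 : ℝ) * Real.log (b / a) * ((q - 1) / (2 * q - 1)) ^ (1 - 1 / q) *
        (a * |f' a| ^ s * |f' b| ^ (1 - s) * (g₂ ((b * |f' b| ^ s / (a * |f' a| ^ s)) ^ (q))) ^ (1 / q)
         + b * |f' b| * (g₂ ((a * |f' a| ^ s / (b * |f' b| ^ s)) ^ (q))) ^ (1 / q)) := by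
  obtain ⟨hs0, hs1⟩ := hs
  have hq0 : (0:ℝ) < q := lt_trans one_pos hq
  have hq0' : q ≠ 0 := hq0.ne'
  have h1q0 : (0:ℝ) ≤ 1/q := by positivity
  have h1q0' : (1:ℝ)/q ≠ 0 := by positivity
  have haI : a ∈ I := interior_subset ha
  have hbI : b ∈ I := interior_subset hb
  have ha0 : 0 < a := hIpos haI
  have hb0 : 0 < b := hIpos hbI
  have hIcc : Set.Icc a b ⊆ interior I := by
    intro x hx
    rcases eq_or_lt_of_le hx.1 with h | h
    · exact h ▸ ha
    rcases eq_or_lt_of_le hx.2 with h' | h'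
    · exact h'.symm ▸ hb
    have hIoo : Set.Ioo a b ⊆ interior I :=
      interior_maximal (fun y hy => hI.out haI hbI ⟨hy.1.le, hy.2.le⟩) isOpen_Ioo
    exact hIoo ⟨h, h'⟩
  set L : ℝ := Real.log b - Real.log a with hLdef
  have hL : 0 < L := sub_pos.mpr (Real.log_lt_log ha0 hab)
  have hlogba : Real.log (b/a) = L := Real.log_div hb0.ne' ha0.ne'
  by_cases hA : |f' a| = 0
  · -- degenerate case: f' vanishes on [a,b)
    have hf'0 : ∀ x ∈ Set.Ico a b, f' x = 0 := by
      intro x hx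
      have hx0 : 0 < x := lt_of_lt_of_le ha0 hx.1
      set t : ℝ := (Real.log b - Real.log x)/L with htdef
      have hxb : Real.log x < Real.log b := Real.log_lt_log hx0 hx.2
      have hax : Real.log a ≤ Real.log x := Real.log_le_log ha0 hx.1
      have ht0 : 0 < t := div_pos (by linarith) hL
      have ht1 : t ≤ 1 := by rw [div_le_one hL]; rw [hLdef]; linarith
      have htL : t * L = Real.log b - Real.log x := by
        rw [htdef]; field_simp
      have hpt : a ^ t * b ^ (1 - t) = x := by
        rw [Real.rpow_def_of_pos ha0, Real.rpow_def_of_pos hb0, ← Real.exp_add,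
          ← Real.exp_log hx0]
        congr 1
        rw [hLdef] at htL
        nlinarith [htL]
      have hc := hconv a ⟨le_refl a, hab.le⟩ b ⟨hab.le, le_refl b⟩ t ⟨ht0.le, ht1⟩
      simp only at hc
      rw [hpt, hA, Real.zero_rpow hq0',
        Real.zero_rpow (ne_of_gt (Real.rpow_pos_of_pos ht0 s)), zero_mul] at hc
      have hnn := Real.rpow_nonneg (abs_nonneg (f' x)) q
      have h0 : |f' x| ^ q = 0 := le_antisymm hc hnn
      have := (Real.rpow_eq_zero (abs_nonneg (f' x)) hq0').mp h0
      exact abs_eq_zero.mp this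
    have hconst : ∀ x ∈ Set.Icc a b, f x = f a := by
      intro x hx
      have hsub : Set.uIcc a x ⊆ Set.Icc a b := by
        rw [Set.uIcc_of_le hx.1]
        exact Set.Icc_subset_Icc le_rfl hx.2
      have hFTC := intervalIntegral.integral_eq_sub_of_hasDerivAt
        (f := f) (f' := f') (a := a) (b := x)
        (fun y hy => hdiff y (hIcc (hsub hy)))
        (hint.mono_set (by rw [Set.uIcc_of_le hab.le]; exact hsub))
      have hbae : ∀ᵐ (y:ℝ), y ≠ b := by
        rw [MeasureTheory.ae_iff]
        have hset : {y : ℝ | ¬ y ≠ b} = {b} := by ext y; simp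
        rw [hset]
        exact measure_singleton b
      have hzero : (∫ y in a..x, f' y) = ∫ y in a..x, (0:ℝ) := by
        apply intervalIntegral.integral_congr_ae
        filter_upwards [hbae] with y hy hyI
        rw [Set.uIoc_of_le hx.1] at hyI
        exact hf'0 y ⟨hyI.1.le, lt_of_le_of_ne (le_trans hyI.2 hx.2) hy⟩
      rw [hzero, intervalIntegral.integral_zero] at hFTC
      linarith [hFTC.symm]
    have hfb' : f b = f a := hconst b ⟨hab.le, le_rfl⟩
    have hI2 : (∫ x in a..b, f x / x) = f a * L := by
      have h1 : (∫ x in a..b, f x / x) = ∫ x in a..b, f a * (1/x) := by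
        apply intervalIntegral.integral_congr
        intro x hx
        rw [Set.uIcc_of_le hab.le] at hx
        show f x / x = f a * (1/x)
        rw [hconst x hx]; ring
      rw [h1, intervalIntegral.integral_const_mul, integral_one_div, hlogba]
      rw [Set.uIcc_of_le hab.le]
      intro h0mem
      exact absurd h0mem.1 (not_le.mpr ha0)
    rw [hI2, hfb']
    have hz : (f a + f a)/2 - 1/L * (f a * L) = 0 := by field_simp; ring
    rw [hz, abs_zero]
    have hAs : |f' a| ^ s = 0 := by rw [hA, Real.zero_rpow hs0.ne']
    rw [hAs]
    have hg0 : g₂ (0:ℝ) = 0 := by simp [g₂, Real.log_zero]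
    rw [mul_zero, zero_div, div_zero, Real.zero_rpow hq0', hg0, Real.zero_rpow h1q0']
    simp
  · -- main case
    have hA0 : 0 < |f' a| := lt_of_le_of_ne (abs_nonneg _) (Ne.symm hA)
    set A := |f' a| with hAdef
    set B := |f' b| with hBdef
    have hB0 : (0:ℝ) < B := lt_of_lt_of_le one_pos hfb
    have hden : 0 < a * A ^ s := by positivity
    have hnum : 0 < b * B ^ s := by positivity
    set r : ℝ := b * B ^ s / (a * A ^ s) with hrdef
    have hr0 : 0 < r := div_pos hnum hden
    have hr1 : 1 < r := by
      rw [hrdef, lt_div_iff₀ hden, one_mul]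
      have h1 : A ^ s ≤ 1 := Real.rpow_le_one (abs_nonneg _) hfa hs0.le
      have h2 : (1:ℝ) ≤ B ^ s := by
        calc (1:ℝ) = 1 ^ s := (Real.one_rpow s).symm
          _ ≤ B ^ s := Real.rpow_le_rpow zero_le_one hfb hs0.le
      nlinarith
    set θ : ℝ := r ^ q with hθdef
    have hθ1 : 1 < θ := by
      rw [hθdef]
      calc (1:ℝ) = 1 ^ q := (Real.one_rpow q).symm
        _ < r ^ q := Real.rpow_lt_rpow zero_le_one hr1 hq0
    have hθ0 : 0 < θ := lt_trans one_pos hθ1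
    set c : ℝ := Real.log θ with hcdef
    have hc0 : 0 < c := Real.log_pos hθ1
    have hexpc : Real.exp c = θ := Real.exp_log hθ0
    set u : ℝ → ℝ := fun t => a * Real.exp (L * t) with hudef
    have hu_cont : Continuous u := by
      rw [hudef]
      exact continuous_const.mul (Real.continuous_exp.comp (continuous_const.mul continuous_id))
    have hu0 : u 0 = a := by simp [hudef]
    have hab' : a * Real.exp L = b := by
      rw [hLdef, Real.exp_sub, Real.exp_log hb0, Real.exp_log ha0]
      field_simp
    have hu1 : u 1 = b := by rw [hudef]; simpa using hab'
    have hupos : ∀ t, 0 < u t := fun t => by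
      show 0 < a * Real.exp (L * t); positivity
    have humem : ∀ t ∈ Set.Icc (0:ℝ) 1, u t ∈ Set.Icc a b := by
      intro t ht
      constructor
      · have h1 : 1 ≤ Real.exp (L * t) := Real.one_le_exp (mul_nonneg hL.le ht.1)
        simp only [hudef]
        nlinarith
      · rw [← hab']
        simp only [hudef]
        have h1 : Real.exp (L * t) ≤ Real.exp L :=
          Real.exp_le_exp.mpr (by nlinarith [ht.2, hL.le])
        exact mul_le_mul_of_nonneg_left h1 ha0.le
    have hu_deriv : ∀ t : ℝ, HasDerivAt u (L * u t) t := by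
      intro t
      have h1 : HasDerivAt (fun y : ℝ => L * y) L t := by
        simpa using (hasDerivAt_id t).const_mul L
      have h2 := (h1.exp).const_mul a
      have h3 : HasDerivAt u (a * (Real.exp (L * t) * L)) t := h2
      convert h3 using 1
      simp only [hudef]
      ring
    have hu_rpow : ∀ t : ℝ, b ^ t * a ^ (1 - t) = u t := by
      intro t
      rw [Real.rpow_def_of_pos hb0, Real.rpow_def_of_pos ha0, ← Real.exp_add, hudef]
      simp only []
      conv_rhs => rw [← Real.exp_log ha0]
      rw [← Real.exp_add]
      congr 1
      rw [hLdef]; ring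
    have hq_bound : ∀ t ∈ Set.Icc (0:ℝ) 1,
        |f' (u t)| ^ q ≤ (B ^ q) ^ (s*t + (1 - s)) * (A ^ q) ^ (s*(1-t)) := by
      intro t ht
      have hc2 := hconv b ⟨hab.le, le_rfl⟩ a ⟨le_rfl, hab.le⟩ t ht
      simp only at hc2
      rw [hu_rpow t] at hc2
      have hBq : (1:ℝ) ≤ B ^ q := by
        calc (1:ℝ) = 1 ^ q := (Real.one_rpow q).symm
          _ ≤ B ^ q := Real.rpow_le_rpow zero_le_one hfb hq0.le
      have hAq : A ^ q ≤ 1 := by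
        calc A ^ q ≤ 1 ^ q := Real.rpow_le_rpow (abs_nonneg _) hfa hq0.le
          _ = 1 := Real.one_rpow q
      refine le_trans hc2 (mul_le_mul ?_ ?_ (Real.rpow_nonneg (Real.rpow_nonneg (abs_nonneg _) q) _)
        (Real.rpow_nonneg (Real.rpow_nonneg (abs_nonneg _) q) _))
      · apply Real.rpow_le_rpow_of_exponent_le hBq
        have := Real.geom_mean_le_arith_mean2_weighted hs0.le (by linarith : (0:ℝ) ≤ 1 - s)
          ht.1 zero_le_one (by ring)
        simpa using this
      · apply Real.rpow_le_rpow_of_exponent_ge (Real.rpow_pos_of_pos hA0 q) hAq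
        rcases eq_or_lt_of_le ht.2 with h | h
        · subst h
          norm_num [Real.zero_rpow hs0.ne']
        · have h1t : 0 < 1 - t := by linarith
          have h2 := Real.rpow_le_rpow_of_exponent_ge h1t (by linarith [ht.1] : 1 - t ≤ 1) hs1
          rw [Real.rpow_one] at h2
          nlinarith [h2, mul_nonneg (by linarith : (0:ℝ) ≤ 1 - s) h1t.le]
    obtain ⟨Mf, hMdef⟩ : ∃ m : ℝ, m = (a * A ^ s) ^ q * B ^ (q * (1 - s)) := ⟨_, rfl⟩
    have hMpos : 0 < Mf := by
      rw [hMdef]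
      exact mul_pos (Real.rpow_pos_of_pos hden q) (Real.rpow_pos_of_pos hB0 _)
    have hpoint : ∀ t ∈ Set.Icc (0:ℝ) 1,
        u t * |f' (u t)| ≤ (Mf * Real.exp (c * t)) ^ (1/q) := by
      intro t ht
      have h8 : u t ^ q * ((B ^ q) ^ (s*t + (1 - s)) * (A ^ q) ^ (s*(1-t)))
          = Mf * Real.exp (c * t) := by
        have e0 : u t = Real.exp (Real.log a + L * t) := by
          rw [Real.exp_add, Real.exp_log ha0, hudef]
        have e1 : u t ^ q = Real.exp ((Real.log a + L * t) * q) := by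
          rw [e0, ← Real.exp_mul]
        have e2 : (B ^ q) ^ (s*t + (1 - s)) = Real.exp (Real.log B * q * (s*t + (1-s))) := by
          rw [Real.rpow_def_of_pos hB0, ← Real.exp_mul]
        have e3 : (A ^ q) ^ (s*(1-t)) = Real.exp (Real.log A * q * (s*(1-t))) := by
          rw [Real.rpow_def_of_pos hA0, ← Real.exp_mul]
        have e4 : Mf = Real.exp ((Real.log a + s * Real.log A) * q + Real.log B * (q*(1-s))) := by
          rw [hMdef, Real.rpow_def_of_pos hden, Real.rpow_def_of_pos hB0, Real.exp_add]
          congr 2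
          rw [Real.log_mul ha0.ne' (Real.rpow_pos_of_pos hA0 s).ne', Real.log_rpow hA0]
        have e5 : c = q * (Real.log b + s * Real.log B - (Real.log a + s * Real.log A)) := by
          rw [hcdef, hθdef, Real.log_rpow hr0, hrdef, Real.log_div hnum.ne' hden.ne',
            Real.log_mul hb0.ne' (Real.rpow_pos_of_pos hB0 s).ne', Real.log_rpow hB0,
            Real.log_mul ha0.ne' (Real.rpow_pos_of_pos hA0 s).ne', Real.log_rpow hA0]
        rw [e1, e2, e3, e4, e5, ← Real.exp_add, ← Real.exp_add, ← Real.exp_add]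
        congr 1
        rw [hLdef]; ring
      have h7 : (u t * |f' (u t)|) ^ q ≤ Mf * Real.exp (c * t) := by
        rw [Real.mul_rpow (hupos t).le (abs_nonneg _)]
        calc u t ^ q * |f' (u t)| ^ q
            ≤ u t ^ q * ((B ^ q) ^ (s*t + (1 - s)) * (A ^ q) ^ (s*(1-t))) :=
              mul_le_mul_of_nonneg_left (hq_bound t ht) (Real.rpow_nonneg (hupos t).le q)
          _ = Mf * Real.exp (c*t) := h8
      calc u t * |f' (u t)| = ((u t * |f' (u t)|) ^ q) ^ (1/q) := by
            rw [← Real.rpow_mul (by positivity), mul_one_div, div_self hq0', Real.rpow_one]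
        _ ≤ (Mf * Real.exp (c*t)) ^ (1/q) :=
            Real.rpow_le_rpow (Real.rpow_nonneg (by positivity) q) h7 h1q0
    -- boundedness of |f' (u t)|
    have hbddB : ∀ t ∈ Set.Icc (0:ℝ) 1, |f' (u t)| ≤ B := by
      intro t ht
      have h6 := hq_bound t ht
      have hBq1 : (1:ℝ) ≤ B ^ q := by
        calc (1:ℝ) = 1 ^ q := (Real.one_rpow q).symm
          _ ≤ B ^ q := Real.rpow_le_rpow zero_le_one hfb hq0.le
      have h9 : (B ^ q) ^ (s*t + (1 - s)) ≤ B ^ q := by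
        nth_rewrite 2 [← Real.rpow_one (B ^ q)]
        exact Real.rpow_le_rpow_of_exponent_le hBq1 (by nlinarith [ht.2, hs0.le, ht.1])
      have h10 : (A ^ q) ^ (s*(1-t)) ≤ 1 := by
        apply Real.rpow_le_one (Real.rpow_nonneg (abs_nonneg _) q)
        · calc A ^ q ≤ 1 ^ q := Real.rpow_le_rpow (abs_nonneg _) hfa hq0.le
            _ = 1 := Real.one_rpow q
        · nlinarith [ht.2, hs0.le]
      have h11 : |f' (u t)| ^ q ≤ B ^ q := by
        calc |f' (u t)| ^ q ≤ _ := h6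
          _ ≤ B ^ q * 1 := mul_le_mul h9 h10
              (Real.rpow_nonneg (Real.rpow_nonneg (abs_nonneg _) _) _) (by positivity)
          _ = B ^ q := mul_one _
      calc |f' (u t)| = (|f' (u t)| ^ q) ^ (1/q) := by
            rw [← Real.rpow_mul (abs_nonneg _), mul_one_div, div_self hq0', Real.rpow_one]
        _ ≤ (B ^ q) ^ (1/q) := Real.rpow_le_rpow (Real.rpow_nonneg (abs_nonneg _) _) h11 h1q0
        _ = B := by rw [← Real.rpow_mul hB0.le, mul_one_div, div_self hq0', Real.rpow_one]
    -- integrability of the main integrand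
    have hf'u_def : ∀ t ∈ Set.Icc (0:ℝ) 1, f' (u t) = deriv f (u t) :=
      fun t ht => ((hdiff (u t) (hIcc (humem t ht))).deriv).symm
    have hintmain : IntervalIntegrable (fun t => L * u t * f' (u t)) volume 0 1 := by
      rw [intervalIntegrable_iff_integrableOn_Ioc_of_le zero_le_one]
      have hmeas : AEStronglyMeasurable (fun t => L * u t * f' (u t))
          (volume.restrict (Set.Ioc (0:ℝ) 1)) := by
        have hm : AEStronglyMeasurable (fun t => L * u t * deriv f (u t))
            (volume.restrict (Set.Ioc (0:ℝ) 1)) := by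
          apply Measurable.aestronglyMeasurable
          exact (measurable_const.mul hu_cont.measurable).mul
            ((measurable_deriv f).comp hu_cont.measurable)
        refine hm.congr ?_
        rw [Filter.EventuallyEq, ae_restrict_iff' measurableSet_Ioc]
        filter_upwards with t ht
        rw [hf'u_def t ⟨ht.1.le, ht.2⟩]
      refine Integrable.mono' (g := fun _ => L * b * B) (integrable_const _) hmeas ?_
      rw [ae_restrict_iff' measurableSet_Ioc]
      filter_upwards with t ht
      have ht' : t ∈ Set.Icc (0:ℝ) 1 := ⟨ht.1.le, ht.2⟩
      have h1 := hbddB t ht'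
      have h2 := humem t ht'
      rw [Real.norm_eq_abs, abs_mul, abs_mul, abs_of_pos hL, abs_of_pos (hupos t)]
      calc L * u t * |f' (u t)| ≤ (L * b) * B := by
            apply mul_le_mul (mul_le_mul le_rfl h2.2 (hupos t).le hL.le) h1 (abs_nonneg _)
            positivity
        _ = L * b * B := rfl
    -- integration by parts
    have hFderiv : ∀ t ∈ Set.uIcc (0:ℝ) 1, HasDerivAt (fun t => f (u t)) (L * u t * f' (u t)) t := by
      intro t ht
      rw [Set.uIcc_of_le zero_le_one] at ht
      have h := (hdiff (u t) (hIcc (humem t ht))).comp t (hu_deriv t)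
      have e : L * u t * f' (u t) = f' (u t) * (L * u t) := by ring
      rw [e]; exact h
    have hwderiv : ∀ t ∈ Set.uIcc (0:ℝ) 1, HasDerivAt (fun t : ℝ => 1 - 2*t) (-2) t := by
      intro t _
      simpa using ((hasDerivAt_id t).const_mul (2:ℝ)).const_sub 1
    have hIBP := intervalIntegral.integral_mul_deriv_eq_deriv_mul hwderiv hFderiv
      (intervalIntegrable_const) hintmain
    simp only [hu0, hu1] at hIBP
    -- hIBP : ∫ t in 0..1, (1-2*t)*(L*u t*f'(u t)) = -f b - f a - ∫ t in 0..1, -2 * f (u t) (roughly)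
    -- substitution
    have hfcont : ContinuousOn f (Set.Icc a b) :=
      fun x hx => (hdiff x (hIcc hx)).continuousAt.continuousWithinAt
    have husub : (∫ x in a..b, f x / x) = L * ∫ t in (0:ℝ)..1, f (u t) := by
      have himg : u '' (Set.uIcc (0:ℝ) 1) ⊆ Set.Icc a b := by
        rw [Set.uIcc_of_le zero_le_one]
        rintro x ⟨t, ht, rfl⟩
        exact humem t ht
      have hcv := intervalIntegral.integral_comp_smul_deriv'' (f := u) (f' := fun t => L * u t)
        (g := fun x => f x / x) (a := (0:ℝ)) (b := (1:ℝ))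
        hu_cont.continuousOn
        (fun t ht => (hu_deriv t).hasDerivWithinAt)
        ((continuous_const.mul hu_cont).continuousOn)
        (((hfcont.div continuousOn_id (fun x hx => (lt_of_lt_of_le ha0 hx.1).ne')).mono himg))
      rw [hu0, hu1] at hcv
      rw [← hcv, ← intervalIntegral.integral_const_mul]
      apply intervalIntegral.integral_congr
      intro t ht
      show (L * u t) • ((fun x => f x / x) ∘ u) t = L * f (u t)
      have h := (hupos t).ne'
      simp only [smul_eq_mul, Function.comp]
      field_simp
    -- collect the identity
    obtain ⟨J, hJdef⟩ : ∃ j : ℝ, j = ∫ t in (0:ℝ)..1, (1 - 2*t) * (L * u t * f' (u t)) := ⟨_, rfl⟩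
    have hmain_id : (f a + f b)/2 - (1/L) * ∫ x in a..b, f x / x = -(1/2) * J := by
      rw [husub, hJdef, hIBP]
      rw [intervalIntegral.integral_const_mul]
      field_simp
      ring
    -- the bounding function
    obtain ⟨Φ, hΦdef⟩ : ∃ p : ℝ → ℝ, p = fun t => L * (Mf * Real.exp (c * t)) ^ (1/q) := ⟨_, rfl⟩
    have hΦcont : Continuous Φ := by
      rw [hΦdef]
      exact continuous_const.mul ((Real.continuous_rpow_const h1q0).comp
        (continuous_const.mul (Real.continuous_exp.comp (continuous_const.mul continuous_id))))
    have hJint : IntervalIntegrable (fun t => (1 - 2*t) * (L * u t * f' (u t))) volume 0 1 :=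
      hintmain.continuousOn_mul ((continuous_const.sub (continuous_const.mul continuous_id)).continuousOn)
    have habs : |J| ≤ ∫ t in (0:ℝ)..1, Φ t := by
      rw [hJdef]
      calc |∫ t in (0:ℝ)..1, (1 - 2*t) * (L * u t * f' (u t))|
          ≤ ∫ t in (0:ℝ)..1, |(1 - 2*t) * (L * u t * f' (u t))| :=
            intervalIntegral.abs_integral_le_integral_abs zero_le_one
        _ ≤ ∫ t in (0:ℝ)..1, Φ t := by
            apply intervalIntegral.integral_mono_on zero_le_one hJint.abs
              (hΦcont.intervalIntegrable 0 1)
            intro t ht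
            rw [abs_mul, abs_mul, abs_mul, abs_of_pos hL, abs_of_pos (hupos t)]
            have h1 : |1 - 2*t| ≤ 1 := by
              rw [abs_le]; constructor <;> nlinarith [ht.1, ht.2]
            have h2 := hpoint t ht
            have h3 : (0:ℝ) ≤ (Mf * Real.exp (c*t)) ^ (1/q) :=
              Real.rpow_nonneg (by positivity) _
            calc |1-2*t| * (L * u t * |f' (u t)|)
                ≤ 1 * (L * ((Mf * Real.exp (c*t)) ^ (1/q))) := by
                  apply mul_le_mul h1 ?_ (by positivity) zero_le_one
                  rw [mul_assoc]
                  exact mul_le_mul_of_nonneg_left h2 hL.le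
              _ = Φ t := by rw [hΦdef]; ring
    -- computing the integral of Φ
    have hΦint : (∫ t in (0:ℝ)..1, Φ t) = L * Mf ^ (1/q) * ∫ t in (0:ℝ)..1, Real.exp (c/q * t) := by
      rw [← intervalIntegral.integral_const_mul]
      apply intervalIntegral.integral_congr
      intro t ht
      show Φ t = L * Mf ^ (1/q) * Real.exp (c/q * t)
      rw [hΦdef]
      show L * (Mf * Real.exp (c * t)) ^ (1/q) = _
      rw [Real.mul_rpow hMpos.le (Real.exp_pos _).le, ← Real.exp_mul,
        show c * t * (1/q) = c/q * t from by ring]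
      ring
    -- Jensen step
    have hI1 : (∫ t in (0:ℝ)..1, Real.exp (c * t)) = (θ - 1)/c := by
      rw [exp_int c hc0.ne', hexpc]
    have hg2θ : g₂ θ = (θ - 1)/c := by
      rw [g₂, if_neg hθ1.ne']
    have hg2pos : 0 < g₂ θ := by
      rw [hg2θ]; apply div_pos (by linarith) hc0
    have hjen : (∫ t in (0:ℝ)..1, Real.exp (c/q * t)) ≤ (g₂ θ) ^ (1/q) := by
      rw [hg2θ, ← hI1]
      exact jensen_exp c q hq
    -- Mf^{1/q}
    have hMfq : Mf ^ (1/q) = a * A ^ s * B ^ (1 - s) := by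
      rw [hMdef, Real.mul_rpow (Real.rpow_nonneg hden.le q) (Real.rpow_nonneg hB0.le _),
        ← Real.rpow_mul hden.le, ← Real.rpow_mul hB0.le,
        show q * (1/q) = 1 from by field_simp,
        show q * (1 - s) * (1/q) = 1 - s from by field_simp,
        Real.rpow_one]
    -- the two terms of RHS coincide
    have hθinv : (a * A ^ s / (b * B ^ s)) ^ q = θ⁻¹ := by
      rw [show a * A ^ s / (b * B ^ s) = r⁻¹ from by rw [hrdef, inv_div],
        Real.inv_rpow hr0.le, hθdef]
    have hg2inv : g₂ θ⁻¹ = g₂ θ / θ := by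
      rw [g₂, g₂, if_neg (by intro h; exact hθ1.ne' (by rwa [inv_eq_one] at h)),
        if_neg hθ1.ne', Real.log_inv]
      have hlogθ : Real.log θ ≠ 0 := hc0.ne'
      field_simp
      ring
    have hθq : θ ^ (1/q) = r := by
      rw [hθdef, ← Real.rpow_mul hr0.le, mul_one_div, div_self hq0', Real.rpow_one]
    have hT2 : b * B * (g₂ ((a * A ^ s / (b * B ^ s)) ^ q)) ^ (1/q)
        = a * A ^ s * B ^ (1 - s) * (g₂ θ) ^ (1/q) := by
      rw [hθinv, hg2inv, Real.div_rpow hg2pos.le hθ0.le, hθq, hrdef]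
      have hB1s : B ^ (1-s) = B / B ^ s := by
        rw [Real.rpow_sub hB0, Real.rpow_one]
      have hAs0 : (0:ℝ) < A ^ s := Real.rpow_pos_of_pos hA0 s
      have hBs0 : (0:ℝ) < B ^ s := Real.rpow_pos_of_pos hB0 s
      rw [hB1s]
      field_simp
    -- final assembly
    rw [hlogba, hmain_id, hT2]
    have hJle : |J| ≤ L * (a * A ^ s * B ^ (1 - s) * (g₂ θ) ^ (1/q)) := by
      refine le_trans habs ?_
      rw [hΦint, hMfq]
      calc L * (a * A ^ s * B ^ (1-s)) * ∫ t in (0:ℝ)..1, Real.exp (c/q * t)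
          ≤ L * (a * A ^ s * B ^ (1-s)) * (g₂ θ) ^ (1/q) := by
            apply mul_le_mul_of_nonneg_left hjen
            positivity
        _ = L * (a * A ^ s * B ^ (1-s) * (g₂ θ) ^ (1/q)) := by ring
    have hC := half_le_C q hq
    have hTnn : 0 ≤ a * A ^ s * B ^ (1 - s) * (g₂ θ) ^ (1/q) := by positivity
    rw [abs_mul]
    have habsJ : |(-(1/2):ℝ)| = 1/2 := by norm_num
    rw [habsJ]
    calc (1:ℝ)/2 * |J| ≤ 1/2 * (L * (a * A ^ s * B ^ (1 - s) * (g₂ θ) ^ (1/q))) :=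
          mul_le_mul_of_nonneg_left hJle (by norm_num)
      _ = 1/2 * (L * (a * A ^ s * B ^ (1 - s) * (g₂ θ) ^ (1/q))) := rfl
      _ ≤ ((q - 1) / (2 * q - 1)) ^ (1 - 1 / q) * (L * (a * A ^ s * B ^ (1 - s) * (g₂ θ) ^ (1/q))) :=
          mul_le_mul_of_nonneg_right hC (mul_nonneg hL.le hTnn)
      _ = 1 / 2 * L * ((q - 1) / (2 * q - 1)) ^ (1 - 1 / q) *
          (a * A ^ s * B ^ (1 - s) * (g₂ θ) ^ (1/q) + a * A ^ s * B ^ (1 - s) * (g₂ θ) ^ (1/q)) := by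
          ring
end
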